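/- arXiv:1703.07914 — 12 statements merged into one kernel-verified Lean document; each statement's English description precedes it below -/
import Mathlib

section
/- Fix positive integers k and T and a real matrix A ∈ ℝ^{k×T}. Define f(Y, M) := Tr(−(4/T)·Aᵀ·Y + (2/T)·Yᵀ·M·Y) − Tr(Mᵀ·M) for Y ∈ ℝ^{k×T} and M ∈ ℝ^{k×k}. Let B be any positive semidefinite k×k real matrix with B³ = (1/T)·A·Aᵀ. Then the strong min-max property holds: inf over Y of sup over M of f(Y, M) equals sup over M of inf over Y of f(Y, M), and both equal −3·Tr(B²) (equivalently, −(3/T^{2/3})·Tr((A·Aᵀ)^{2/3})). -/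
open Matrix

lemma aux_trace_tm_nonneg {m n : ℕ} (X : Matrix (Fin m) (Fin n) ℝ) :
    0 ≤ (Xᵀ * X).trace := by
  rw [Matrix.trace]
  refine Finset.sum_nonneg fun j _ => ?_
  simp only [Matrix.diag_apply, Matrix.mul_apply, Matrix.transpose_apply]
  exact Finset.sum_nonneg fun i _ => mul_self_nonneg _

lemma aux_eq_zero_of_trace {m n : ℕ} (X : Matrix (Fin m) (Fin n) ℝ)
    (h : (Xᵀ * X).trace = 0) : X = 0 := by
  rw [Matrix.trace] at h
  have h2 : ∀ j ∈ Finset.univ, (Xᵀ * X).diag j = 0 := by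
    refine (Finset.sum_eq_zero_iff_of_nonneg fun j _ => ?_).mp h
    simp only [Matrix.diag_apply, Matrix.mul_apply, Matrix.transpose_apply]
    exact Finset.sum_nonneg fun i _ => mul_self_nonneg _
  ext i j
  have h3 := h2 j (Finset.mem_univ j)
  simp only [Matrix.diag_apply, Matrix.mul_apply, Matrix.transpose_apply] at h3
  have h4 := (Finset.sum_eq_zero_iff_of_nonneg fun i (_ : i ∈ Finset.univ) =>
    mul_self_nonneg (X i j)).mp h3 i (Finset.mem_univ i)
  simpa using mul_self_eq_zero.mp h4

lemma aux_trace_conj_nonneg {n m : ℕ} {C : Matrix (Fin n) (Fin n) ℝ} (hC : C.PosSemidef)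
    (X : Matrix (Fin n) (Fin m) ℝ) : 0 ≤ (Xᵀ * C * X).trace := by
  have h := hC.conjTranspose_mul_mul_same X
  rw [conjTranspose_eq_transpose_of_trivial] at h
  rw [Matrix.trace]
  refine Finset.sum_nonneg fun j _ => ?_
  simpa using h.dotProduct_mulVec_nonneg (Pi.single j 1)

/-- Strong min-max property for the reduced PSP objective
`f(Y, M) = Tr(−(4/T)AᵀY + (2/T)YᵀMY) − Tr(MᵀM)`:
both `inf_Y sup_M` and `sup_M inf_Y` equal `−3 Tr(B²)` where `B` is a
positive semidefinite matrix with `B³ = (1/T)AAᵀ`. -/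
theorem psp_strong_minmax (k T : ℕ) (hk : 0 < k) (hT : 0 < T)
    (A : Matrix (Fin k) (Fin T) ℝ)
    (B : Matrix (Fin k) (Fin k) ℝ) (hB : B.PosSemidef)
    (hB3 : B ^ 3 = (1 / (T : ℝ)) • (A * Aᵀ)) :
    (⨅ Y : Matrix (Fin k) (Fin T) ℝ, ⨆ M : Matrix (Fin k) (Fin k) ℝ,
        ((((-(4 / (T : ℝ))) • (Aᵀ * Y) + (2 / (T : ℝ)) • (Yᵀ * M * Y)).trace
          - (Mᵀ * M).trace : ℝ) : EReal))
      = ((-3 * (B ^ 2).trace : ℝ) : EReal) ∧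
    (⨆ M : Matrix (Fin k) (Fin k) ℝ, ⨅ Y : Matrix (Fin k) (Fin T) ℝ,
        ((((-(4 / (T : ℝ))) • (Aᵀ * Y) + (2 / (T : ℝ)) • (Yᵀ * M * Y)).trace
          - (Mᵀ * M).trace : ℝ) : EReal))
      = ((-3 * (B ^ 2).trace : ℝ) : EReal) := by
  have ht : (0:ℝ) < (T:ℝ) := by exact_mod_cast hT
  -- ## Spectral construction of the pseudoinverse C of B
  have hH : B.IsHermitian := hB.1
  set U : Matrix (Fin k) (Fin k) ℝ := (hH.eigenvectorUnitary : Matrix (Fin k) (Fin k) ℝ) with hU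
  have hU2 : star U * U = 1 := (Matrix.mem_unitaryGroup_iff').mp hH.eigenvectorUnitary.2
  set μ : Fin k → ℝ := hH.eigenvalues with hμ
  have hBspec : B = U * diagonal μ * star U := by
    have := hH.spectral_theorem
    simpa using this
  have hprod : ∀ d e : Fin k → ℝ, (U * diagonal d * star U) * (U * diagonal e * star U)
      = U * diagonal (fun i => d i * e i) * star U := by
    intro d e
    calc (U * diagonal d * star U) * (U * diagonal e * star U)
        = U * diagonal d * (star U * U) * diagonal e * star U := by noncomm_ring
      _ = U * diagonal (fun i => d i * e i) * star U := by
          rw [hU2, mul_one, mul_assoc U, diagonal_mul_diagonal]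
  set C : Matrix (Fin k) (Fin k) ℝ := U * diagonal (fun i => (μ i)⁻¹) * star U with hC
  have hstar : ∀ X : Matrix (Fin k) (Fin k) ℝ, star X = Xᵀ := fun X => by
    rw [star_eq_conjTranspose, conjTranspose_eq_transpose_of_trivial]
  have hB2s : B^2 = U * diagonal (fun i => μ i * μ i) * star U := by
    rw [pow_two, hBspec, hprod]
  have hB3s : B^3 = U * diagonal (fun i => μ i * μ i * μ i) * star U := by
    rw [pow_succ, hB2s, hBspec, hprod]
  have hCt : Cᵀ = C := by
    rw [hC, hstar U]
    simp [transpose_mul, diagonal_transpose, Matrix.mul_assoc]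
  have key : ∀ d e f : Fin k → ℝ, (∀ i, d i * e i = f i) →
      (U * diagonal d * star U) * (U * diagonal e * star U) = U * diagonal f * star U := by
    intro d e f h
    rw [hprod, show (fun i => d i * e i) = f from funext h]
  have sc : ∀ x : ℝ, x⁻¹ * (x * x) = x ∧ (x * x) * x⁻¹ = x ∧ x⁻¹ * (x * x * x) = x * x
      ∧ (x * x * x) * x⁻¹ = x * x := by
    intro x
    rcases eq_or_ne x 0 with h | h
    · simp [h]
    · exact ⟨by field_simp, by field_simp, by field_simp, by field_simp⟩
  have hCB2s : C * B^2 = B := by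
    rw [hC, hB2s, key _ _ μ (fun i => (sc (μ i)).1), ← hBspec]
  have hB2Cs : B^2 * C = B := by
    rw [hC, hB2s, key _ _ μ (fun i => (sc (μ i)).2.1), ← hBspec]
  have hCB3s : C * B^3 = B^2 := by
    rw [hC, hB3s, key _ _ (fun i => μ i * μ i) (fun i => (sc (μ i)).2.2.1), ← hB2s]
  have hB3Cs : B^3 * C = B^2 := by
    rw [hC, hB3s, key _ _ (fun i => μ i * μ i) (fun i => (sc (μ i)).2.2.2), ← hB2s]
  have hBt : Bᵀ = B := by
    rw [← conjTranspose_eq_transpose_of_trivial]; exact hH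
  -- A Aᵀ in terms of B
  have hAAt : A * Aᵀ = (T:ℝ) • B^3 := by
    rw [hB3, smul_smul, mul_one_div, div_self ht.ne', one_smul]
  -- ## B * (C * A) = A  via the trace trick
  have hWt : (B * (C * A))ᵀ = Aᵀ * C * B := by
    rw [transpose_mul, transpose_mul, hCt, hBt]
  have hT1 : (Aᵀ * A).trace = (T:ℝ) * (B^3).trace := by
    rw [Matrix.trace_mul_comm, hAAt, Matrix.trace_smul, smul_eq_mul]
  have hT2 : (Aᵀ * (B * (C * A))).trace = (T:ℝ) * (B^3).trace := by
    rw [Matrix.trace_mul_comm]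
    rw [show (B * (C * A)) * Aᵀ = B * (C * (A * Aᵀ)) from by simp only [Matrix.mul_assoc]]
    rw [hAAt, Matrix.mul_smul, Matrix.mul_smul, hCB3s, Matrix.trace_smul, smul_eq_mul,
      ← pow_succ']
  have hT3 : ((Aᵀ * C * B) * A).trace = (T:ℝ) * (B^3).trace := by
    rw [Matrix.trace_mul_comm]
    rw [show A * (Aᵀ * C * B) = (A * Aᵀ) * (C * B) from by simp only [Matrix.mul_assoc]]
    rw [hAAt, Matrix.smul_mul, ← Matrix.mul_assoc, hB3Cs, Matrix.trace_smul, smul_eq_mul,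
      ← pow_succ]
  have hT4 : ((Aᵀ * C * B) * (B * (C * A))).trace = (T:ℝ) * (B^3).trace := by
    rw [show (Aᵀ * C * B) * (B * (C * A)) = Aᵀ * ((C * (B*B) * C) * A) from by simp only [Matrix.mul_assoc]]
    rw [show C * (B*B) * C = B * C from by rw [← pow_two, hCB2s]]
    rw [Matrix.trace_mul_comm]
    rw [show (B * C * A) * Aᵀ = B * (C * (A * Aᵀ)) from by simp only [Matrix.mul_assoc]]
    rw [hAAt, Matrix.mul_smul, Matrix.mul_smul, hCB3s, Matrix.trace_smul, smul_eq_mul,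
      ← pow_succ']
  have hXX : ((A - B * (C * A))ᵀ * (A - B * (C * A))).trace = 0 := by
    rw [transpose_sub, hWt]
    simp only [Matrix.sub_mul, Matrix.mul_sub, Matrix.trace_sub]
    rw [hT1, hT2, hT3, hT4]
    ring
  have hBCA : B * (C * A) = A := (sub_eq_zero.mp (aux_eq_zero_of_trace _ hXX)).symm
  have hACB : Aᵀ * C * B = Aᵀ := by
    have h := congrArg Matrix.transpose hBCA
    rwa [hWt] at h
  have hACAtr : (Aᵀ * (C * A)).trace = (T:ℝ) * (B^2).trace := by
    rw [Matrix.trace_mul_comm]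
    rw [show (C * A) * Aᵀ = C * (A * Aᵀ) from by simp only [Matrix.mul_assoc]]
    rw [hAAt, Matrix.mul_smul, hCB3s, Matrix.trace_smul, smul_eq_mul]
  -- ## KEY inequality : 2 Tr(AᵀY) ≤ Tr(YᵀBY) + T Tr(B²)
  have hKEY : ∀ Y : Matrix (Fin k) (Fin T) ℝ,
      2 * (Aᵀ * Y).trace ≤ (Yᵀ * B * Y).trace + (T:ℝ) * (B^2).trace := by
    intro Y
    have h0 : 0 ≤ ((Y - C * A)ᵀ * B * (Y - C * A)).trace := aux_trace_conj_nonneg hB _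
    have hct : (C * A)ᵀ = Aᵀ * C := by rw [transpose_mul, hCt]
    rw [transpose_sub, hct] at h0
    simp only [Matrix.sub_mul, Matrix.mul_sub, Matrix.trace_sub] at h0
    have q1 : ((Yᵀ * B) * (C * A)).trace = (Aᵀ * Y).trace := by
      rw [Matrix.mul_assoc, hBCA]
      calc (Yᵀ * A).trace = ((Yᵀ * A)ᵀ).trace := (Matrix.trace_transpose _).symm
        _ = (Aᵀ * Y).trace := by rw [transpose_mul, transpose_transpose]
    have q2 : (((Aᵀ * C) * B) * Y).trace = (Aᵀ * Y).trace := by rw [hACB]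
    have q3 : (((Aᵀ * C) * B) * (C * A)).trace = (T:ℝ) * (B^2).trace := by
      rw [hACB, hACAtr]
    linarith [h0, q1, q2, q3]
  have h2 : ∀ Y : Matrix (Fin k) (Fin T) ℝ,
      4 / (T:ℝ) * (Aᵀ * Y).trace ≤ 2 / (T:ℝ) * (Yᵀ * B * Y).trace + 2 * (B^2).trace := by
    intro Y
    have h3 := mul_le_mul_of_nonneg_left (hKEY Y)
      (le_of_lt (show (0:ℝ) < 2 / (T:ℝ) by positivity))
    rw [mul_add, show 2 / (T:ℝ) * ((T:ℝ) * (B^2).trace) = 2 * (B^2).trace from by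
      field_simp] at h3
    ring_nf at h3 ⊢
    linarith [h3]
  -- ## square expansion : 0 ≤ Tr((P/T - B)²)
  have hSQ : ∀ Y : Matrix (Fin k) (Fin T) ℝ,
      0 ≤ 1 / (T:ℝ) * (1 / (T:ℝ) * ((Y * Yᵀ) * (Y * Yᵀ)).trace)
        - 2 / (T:ℝ) * (Yᵀ * B * Y).trace + (B^2).trace := by
    intro Y
    have h0 : 0 ≤ (((1/(T:ℝ)) • (Y * Yᵀ) - B)ᵀ * ((1/(T:ℝ)) • (Y * Yᵀ) - B)).trace :=
      aux_trace_tm_nonneg _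
    simp only [Matrix.transpose_sub, Matrix.transpose_smul, Matrix.transpose_mul,
      Matrix.transpose_transpose, hBt, Matrix.sub_mul, Matrix.mul_sub,
      Matrix.smul_mul, Matrix.mul_smul, smul_smul, Matrix.trace_sub, Matrix.trace_smul,
      smul_eq_mul] at h0
    have e1 : (B * (Y * Yᵀ)).trace = ((Y * Yᵀ) * B).trace := Matrix.trace_mul_comm _ _
    have e2 : ((Y * Yᵀ) * B).trace = (Yᵀ * B * Y).trace := by
      rw [Matrix.trace_mul_comm (Yᵀ * B) Y, ← Matrix.mul_assoc]
    have e3 : (B * B).trace = (B^2).trace := by rw [pow_two]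
    rw [e1, e2, e3] at h0
    ring_nf at h0 ⊢
    linarith [h0]
  -- ## sup over M inequality
  have hSUPineq : ∀ (Y : Matrix (Fin k) (Fin T) ℝ) (M : Matrix (Fin k) (Fin k) ℝ),
      2 / (T:ℝ) * (Yᵀ * M * Y).trace - (Mᵀ * M).trace
        ≤ 1 / (T:ℝ) * (1 / (T:ℝ) * ((Y * Yᵀ) * (Y * Yᵀ)).trace) := by
    intro Y M
    have h0 : 0 ≤ ((M - (1/(T:ℝ)) • (Y * Yᵀ))ᵀ * (M - (1/(T:ℝ)) • (Y * Yᵀ))).trace :=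
      aux_trace_tm_nonneg _
    simp only [Matrix.transpose_sub, Matrix.transpose_smul, Matrix.transpose_mul,
      Matrix.transpose_transpose, Matrix.sub_mul, Matrix.mul_sub,
      Matrix.smul_mul, Matrix.mul_smul, smul_smul, Matrix.trace_sub, Matrix.trace_smul,
      smul_eq_mul] at h0
    have e1 : (Mᵀ * (Y * Yᵀ)).trace = ((Y * Yᵀ) * M).trace := by
      calc (Mᵀ * (Y * Yᵀ)).trace = ((Mᵀ * (Y * Yᵀ))ᵀ).trace := (Matrix.trace_transpose _).symm
        _ = ((Y * Yᵀ) * M).trace := by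
            rw [transpose_mul, transpose_mul, transpose_transpose, transpose_transpose]
    have e2 : ((Y * Yᵀ) * M).trace = (Yᵀ * M * Y).trace := by
      rw [Matrix.trace_mul_comm (Yᵀ * M) Y, ← Matrix.mul_assoc]
    rw [e1, e2] at h0
    ring_nf at h0 ⊢
    linarith [h0]
  -- scalarization of the objective
  have hfeq : ∀ (Y : Matrix (Fin k) (Fin T) ℝ) (M : Matrix (Fin k) (Fin k) ℝ),
      ((-(4 / (T:ℝ))) • (Aᵀ * Y) + (2 / (T:ℝ)) • (Yᵀ * M * Y)).trace - (Mᵀ * M).trace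
        = -(4 / (T:ℝ)) * (Aᵀ * Y).trace + 2 / (T:ℝ) * (Yᵀ * M * Y).trace
          - (Mᵀ * M).trace := by
    intro Y M
    rw [Matrix.trace_add, Matrix.trace_smul, Matrix.trace_smul, smul_eq_mul, smul_eq_mul]
  -- value of the objective at the optimal M₀ = (1/T) Y Yᵀ
  have v1 : ∀ Y : Matrix (Fin k) (Fin T) ℝ,
      (Yᵀ * ((1/(T:ℝ)) • (Y * Yᵀ)) * Y).trace
        = 1 / (T:ℝ) * ((Y * Yᵀ) * (Y * Yᵀ)).trace := by
    intro Y
    rw [Matrix.mul_smul, Matrix.smul_mul, Matrix.trace_smul, smul_eq_mul]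
    congr 1
    rw [Matrix.trace_mul_comm, ← Matrix.mul_assoc]
  have v2 : ∀ Y : Matrix (Fin k) (Fin T) ℝ,
      (((1/(T:ℝ)) • (Y * Yᵀ))ᵀ * ((1/(T:ℝ)) • (Y * Yᵀ))).trace
        = 1 / (T:ℝ) * (1 / (T:ℝ) * ((Y * Yᵀ) * (Y * Yᵀ)).trace) := by
    intro Y
    rw [Matrix.transpose_smul, Matrix.transpose_mul, Matrix.transpose_transpose,
      Matrix.smul_mul, Matrix.mul_smul, smul_smul, Matrix.trace_smul, smul_eq_mul]
    ring_nf
  -- ## the optimal Y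
  have hYs : (C * A) * (C * A)ᵀ = (T:ℝ) • B := by
    rw [transpose_mul, hCt]
    rw [show (C * A) * (Aᵀ * C) = C * ((A * Aᵀ) * C) from by simp only [Matrix.mul_assoc]]
    rw [hAAt, Matrix.smul_mul, hB3Cs, Matrix.mul_smul, hCB2s]
  have pstar : (((C * A) * (C * A)ᵀ) * ((C * A) * (C * A)ᵀ)).trace
      = (T:ℝ) * (T:ℝ) * (B^2).trace := by
    rw [hYs, Matrix.smul_mul, Matrix.mul_smul, smul_smul, Matrix.trace_smul, smul_eq_mul,
      ← pow_two B]
  -- ## Part 1 : inf sup = -3 Tr(B²)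
  have hsup : ∀ Y : Matrix (Fin k) (Fin T) ℝ,
      (⨆ M : Matrix (Fin k) (Fin k) ℝ,
          ((((-(4 / (T : ℝ))) • (Aᵀ * Y) + (2 / (T : ℝ)) • (Yᵀ * M * Y)).trace
            - (Mᵀ * M).trace : ℝ) : EReal))
        = ((-(4 / (T:ℝ)) * (Aᵀ * Y).trace
            + 1 / (T:ℝ) * (1 / (T:ℝ) * ((Y * Yᵀ) * (Y * Yᵀ)).trace) : ℝ) : EReal) := by
    intro Y
    apply le_antisymm
    · refine iSup_le fun M => ?_
      rw [EReal.coe_le_coe_iff, hfeq Y M]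
      have := hSUPineq Y M
      linarith
    · refine le_iSup_of_le ((1/(T:ℝ)) • (Y * Yᵀ)) (le_of_eq ?_)
      rw [EReal.coe_eq_coe_iff, hfeq Y _, v1 Y, v2 Y]
      ring
  have part1 : (⨅ Y : Matrix (Fin k) (Fin T) ℝ, ⨆ M : Matrix (Fin k) (Fin k) ℝ,
        ((((-(4 / (T : ℝ))) • (Aᵀ * Y) + (2 / (T : ℝ)) • (Yᵀ * M * Y)).trace
          - (Mᵀ * M).trace : ℝ) : EReal))
      = ((-3 * (B ^ 2).trace : ℝ) : EReal) := by
    rw [iInf_congr hsup]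
    apply le_antisymm
    · refine iInf_le_of_le (C * A) (le_of_eq ?_)
      rw [EReal.coe_eq_coe_iff, hACAtr, pstar]
      field_simp
      ring
    · refine le_iInf fun Y => ?_
      rw [EReal.coe_le_coe_iff]
      have hq := hSQ Y
      have hh := h2 Y
      linarith
  refine ⟨part1, ?_⟩
  -- ## Part 2 : sup inf = -3 Tr(B²)
  apply le_antisymm
  · exact (iSup_iInf_le_iInf_iSup _).trans (le_of_eq part1)
  · refine le_iSup_of_le B (le_iInf fun Y => ?_)
    rw [EReal.coe_le_coe_iff, hfeq Y B]
    have hBB : (Bᵀ * B).trace = (B^2).trace := by rw [hBt, pow_two]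
    have hh := h2 Y
    linarith
end

section
/- Fix positive integers k and T, A ∈ ℝ^{k×T}, and Y* ∈ ℝ^{k×T}, M* ∈ ℝ^{k×k} satisfying the stationarity equations M* = (1/T)·Y*·Y*ᵀ and M*·Y* = A. Then: (i) M* is symmetric positive semidefinite; (ii) (M*)³ = (1/T)·A·Aᵀ; and (iii) f(Y*, M*) = −3·Tr((M*)²), where f(Y, M) := Tr(−(4/T)·Aᵀ·Y + (2/T)·Yᵀ·M·Y) − Tr(Mᵀ·M). -/
open Matrix

lemma psd_smul {n : ℕ} {M : Matrix (Fin n) (Fin n) ℝ} (h : M.PosSemidef) {c : ℝ}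
    (hc : 0 ≤ c) : (c • M).PosSemidef := by
  refine ⟨?_, fun x => ?_⟩
  · unfold Matrix.IsHermitian
    rw [conjTranspose_smul, h.1]
    simp
  · have := h.2 x
    rw [show (x.sum fun i xi ↦ x.sum fun j xj ↦ star xi * (c • M) i j * xj) =
        c * (x.sum fun i xi ↦ x.sum fun j xj ↦ star xi * M i j * xj) by
      simp only [Finsupp.sum, Finset.mul_sum, Matrix.smul_apply, smul_eq_mul]
      exact Finset.sum_congr rfl fun i _ => Finset.sum_congr rfl fun j _ => by ring]
    exact mul_nonneg hc this

/-- If `M* = (1/T) Y* Y*ᵀ` and `M* Y* = A`, then `M*` is symmetric positive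
semidefinite, `(M*)³ = (1/T) A Aᵀ`, and the reduced PSP objective
`f(Y, M) = Tr(−(4/T)AᵀY + (2/T)YᵀMY) − Tr(MᵀM)` satisfies
`f(Y*, M*) = −3 Tr((M*)²)`. -/
theorem psp_saddle_value (k T : ℕ) (hk : 0 < k) (hT : 0 < T)
    (A Ystar : Matrix (Fin k) (Fin T) ℝ) (Mstar : Matrix (Fin k) (Fin k) ℝ)
    (hM : Mstar = (1 / (T : ℝ)) • (Ystar * Ystarᵀ))
    (hMY : Mstar * Ystar = A) :
    Mstar.PosSemidef ∧
    Mstar ^ 3 = (1 / (T : ℝ)) • (A * Aᵀ) ∧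
    (((-(4 / (T : ℝ))) • (Aᵀ * Ystar)
        + (2 / (T : ℝ)) • (Ystarᵀ * Mstar * Ystar)).trace
      - (Mstarᵀ * Mstar).trace) = -3 * (Mstar ^ 2).trace := by
  have hT0 : (T : ℝ) ≠ 0 := Nat.cast_ne_zero.mpr hT.ne'
  have hpsd : Mstar.PosSemidef := by
    rw [hM]
    exact psd_smul (posSemidef_self_mul_conjTranspose Ystar) (by positivity)
  have hsym : Mstarᵀ = Mstar := hpsd.1
  have hYY : Ystar * Ystarᵀ = (T : ℝ) • Mstar := by
    rw [hM, smul_smul]; field_simp; simp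
  have hAA : A * Aᵀ = (T : ℝ) • Mstar ^ 3 := by
    rw [← hMY, transpose_mul, hsym, Matrix.mul_assoc, ← Matrix.mul_assoc Ystar, hYY,
      smul_mul_assoc, mul_smul_comm, pow_succ, pow_two, Matrix.mul_assoc]
  have hcube : Mstar ^ 3 = (1 / (T : ℝ)) • (A * Aᵀ) := by
    rw [hAA, smul_smul, one_div, inv_mul_cancel₀ hT0, one_smul]
  refine ⟨hpsd, hcube, ?_⟩
  have htr : (Ystarᵀ * Mstar * Ystar).trace = (T : ℝ) * (Mstar ^ 2).trace := by
    rw [Matrix.mul_assoc, trace_mul_comm, Matrix.mul_assoc, hYY,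
      mul_smul_comm, trace_smul, sq]
    simp
  have htrA : (Aᵀ * Ystar).trace = (T : ℝ) * (Mstar ^ 2).trace := by
    rw [← hMY, transpose_mul, hsym, Matrix.mul_assoc, ← htr, Matrix.mul_assoc]
  rw [trace_add, trace_smul, trace_smul, htr, htrA, hsym, ← sq]
  simp only [smul_eq_mul]
  field_simp
  ring
end

section
/- Fix positive integers n, k, T, and matrices X ∈ ℝ^{n×T}, Y ∈ ℝ^{k×T}. Define L(W, M) := Tr(−(4/T)·Xᵀ·Wᵀ·Y + (2/T)·Yᵀ·M·Y) + 2·Tr(Wᵀ·W) − Tr(Mᵀ·M) for W ∈ ℝ^{k×n}, M ∈ ℝ^{k×k}. Then inf over W of sup over M of L(W, M) equals (1/T²)·‖Xᵀ·X − Yᵀ·Y‖_F² − (1/T²)·‖Xᵀ·X‖_F²; moreover the infimum over W is attained at W* = (1/T)·Y·Xᵀ and the supremum over M is attained at M* = (1/T)·Y·Yᵀ. -/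
open Matrix

lemma trace_tt_nonneg {a b : ℕ} (P : Matrix (Fin a) (Fin b) ℝ) :
    0 ≤ (Pᵀ * P).trace := by
  rw [Matrix.trace]
  refine Finset.sum_nonneg fun i _ => ?_
  rw [Matrix.diag_apply, Matrix.mul_apply]
  exact Finset.sum_nonneg fun j _ => mul_self_nonneg _

lemma trace_ttm {a b : ℕ} (A B : Matrix (Fin a) (Fin b) ℝ) :
    (Aᵀ * B).trace = (Bᵀ * A).trace := by
  rw [← Matrix.trace_transpose (Aᵀ * B), Matrix.transpose_mul, Matrix.transpose_transpose]

lemma trace_expand {a b : ℕ} (A B : Matrix (Fin a) (Fin b) ℝ) :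
    ((A - B)ᵀ * (A - B)).trace
      = (Aᵀ * A).trace - 2 * (Bᵀ * A).trace + (Bᵀ * B).trace := by
  have h := trace_ttm A B
  simp [Matrix.transpose_sub, Matrix.sub_mul, Matrix.mul_sub, h]
  ring

lemma trace_gram_comm {a b c : ℕ} (X : Matrix (Fin a) (Fin b) ℝ)
    (Y : Matrix (Fin c) (Fin b) ℝ) :
    ((X * Yᵀ) * (Y * Xᵀ)).trace = ((Yᵀ * Y) * (Xᵀ * X)).trace := by
  rw [show (X * Yᵀ) * (Y * Xᵀ) = (X * (Yᵀ * Y)) * Xᵀ by simp [Matrix.mul_assoc],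
    Matrix.trace_mul_comm,
    show Xᵀ * (X * (Yᵀ * Y)) = (Xᵀ * X) * (Yᵀ * Y) by simp [Matrix.mul_assoc],
    Matrix.trace_mul_comm]

/-- The min-max over the synaptic weight variables of the mixed PSP objective
`L(W, M) = Tr(−(4/T)XᵀWᵀY + (2/T)YᵀMY) + 2 Tr(WᵀW) − Tr(MᵀM)` equals
`(1/T²)‖XᵀX − YᵀY‖_F² − (1/T²)‖XᵀX‖_F²`, with the infimum over `W` attained
at `W* = (1/T)YXᵀ` and the supremum over `M` attained at `M* = (1/T)YYᵀ`. -/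
theorem psp_mixed_objective_minmax (n k T : ℕ) (hn : 0 < n) (hk : 0 < k) (hT : 0 < T)
    (X : Matrix (Fin n) (Fin T) ℝ) (Y : Matrix (Fin k) (Fin T) ℝ) :
    let L : Matrix (Fin k) (Fin n) ℝ → Matrix (Fin k) (Fin k) ℝ → ℝ :=
      fun W M =>
        ((-(4 / (T : ℝ))) • (Xᵀ * Wᵀ * Y) + (2 / (T : ℝ)) • (Yᵀ * M * Y)).trace
          + 2 * (Wᵀ * W).trace - (Mᵀ * M).trace
    let val : ℝ :=
      (1 / (T : ℝ) ^ 2) * ((Xᵀ * X - Yᵀ * Y)ᵀ * (Xᵀ * X - Yᵀ * Y)).trace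
        - (1 / (T : ℝ) ^ 2) * ((Xᵀ * X)ᵀ * (Xᵀ * X)).trace
    let Wstar : Matrix (Fin k) (Fin n) ℝ := (1 / (T : ℝ)) • (Y * Xᵀ)
    let Mstar : Matrix (Fin k) (Fin k) ℝ := (1 / (T : ℝ)) • (Y * Yᵀ)
    (⨅ W : Matrix (Fin k) (Fin n) ℝ, ⨆ M : Matrix (Fin k) (Fin k) ℝ,
        ((L W M : ℝ) : EReal)) = ((val : ℝ) : EReal) ∧
    (⨆ M : Matrix (Fin k) (Fin k) ℝ, ((L Wstar M : ℝ) : EReal)) = ((val : ℝ) : EReal) ∧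
    ((L Wstar Mstar : ℝ) : EReal)
      = ⨆ M : Matrix (Fin k) (Fin k) ℝ, ((L Wstar M : ℝ) : EReal) := by
  intro L val Wstar Mstar
  have hT' : (T : ℝ) ≠ 0 := by positivity
  -- key trace identities
  have key2 : ∀ M : Matrix (Fin k) (Fin k) ℝ,
      (Yᵀ * M * Y).trace = T * (Mstarᵀ * M).trace := by
    intro M
    show (Yᵀ * M * Y).trace = T * ((((1 / (T : ℝ)) • (Y * Yᵀ))ᵀ * M).trace)
    rw [Matrix.transpose_smul, Matrix.transpose_mul, Matrix.transpose_transpose,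
      Matrix.smul_mul, Matrix.trace_smul, smul_eq_mul,
      Matrix.trace_mul_comm, ← Matrix.mul_assoc]
    field_simp
  have key1 : ∀ W : Matrix (Fin k) (Fin n) ℝ,
      (Xᵀ * Wᵀ * Y).trace = T * (Wstarᵀ * W).trace := by
    intro W
    have h1 : (Xᵀ * Wᵀ * Y).trace = ((X * Yᵀ) * W).trace := by
      rw [← Matrix.trace_transpose (Xᵀ * Wᵀ * Y)]
      simp only [Matrix.transpose_mul, Matrix.transpose_transpose]
      rw [Matrix.trace_mul_comm, Matrix.mul_assoc, Matrix.trace_mul_comm]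
    show _ = T * ((((1 / (T : ℝ)) • (Y * Xᵀ))ᵀ * W).trace)
    rw [h1, Matrix.transpose_smul, Matrix.transpose_mul, Matrix.transpose_transpose,
      Matrix.smul_mul, Matrix.trace_smul, smul_eq_mul]
    field_simp
  have hc : ∀ c x : ℝ, (c / (T : ℝ)) * ((T : ℝ) * x) = c * x := by
    intro c x; field_simp
  have hc' : ∀ x : ℝ, -(4 / (T : ℝ)) * ((T : ℝ) * x) = -4 * x := by
    intro x; field_simp
  -- L unfolds
  have hLdef : ∀ W M, L W M =
      -(4 / (T : ℝ)) * (Xᵀ * Wᵀ * Y).trace + (2 / (T : ℝ)) * (Yᵀ * M * Y).trace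
        + 2 * (Wᵀ * W).trace - (Mᵀ * M).trace := by
    intro W M
    simp [L, Matrix.trace_add, Matrix.trace_smul, smul_eq_mul]
  -- optimality of Mstar
  have hMle : ∀ W M, L W M ≤ L W Mstar := by
    intro W M
    have e3 := trace_expand M Mstar
    have e4 := trace_tt_nonneg (M - Mstar)
    rw [hLdef W M, hLdef W Mstar, key2 M, key2 Mstar, hc, hc]
    linarith
  -- optimality of Wstar
  have hWle : ∀ W, L Wstar Mstar ≤ L W Mstar := by
    intro W
    have e3 := trace_expand W Wstar
    have e4 := trace_tt_nonneg (W - Wstar)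
    rw [hLdef W Mstar, hLdef Wstar Mstar, key1 W, key1 Wstar, hc', hc']
    linarith
  -- the value
  have hW2 : (Wstarᵀ * Wstar).trace
      = (1 / (T : ℝ)) ^ 2 * ((X * Yᵀ) * (Y * Xᵀ)).trace := by
    show ((((1 / (T : ℝ)) • (Y * Xᵀ))ᵀ) * (((1 / (T : ℝ)) • (Y * Xᵀ)))).trace = _
    rw [Matrix.transpose_smul, Matrix.transpose_mul, Matrix.transpose_transpose,
      Matrix.smul_mul, Matrix.mul_smul, Matrix.trace_smul, Matrix.trace_smul,
      smul_eq_mul, smul_eq_mul]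
    ring
  have hM2 : (Mstarᵀ * Mstar).trace
      = (1 / (T : ℝ)) ^ 2 * ((Y * Yᵀ) * (Y * Yᵀ)).trace := by
    show ((((1 / (T : ℝ)) • (Y * Yᵀ))ᵀ) * (((1 / (T : ℝ)) • (Y * Yᵀ)))).trace = _
    rw [Matrix.transpose_smul, Matrix.transpose_mul, Matrix.transpose_transpose,
      Matrix.smul_mul, Matrix.mul_smul, Matrix.trace_smul, Matrix.trace_smul,
      smul_eq_mul, smul_eq_mul]
    ring
  have hcross : ((X * Yᵀ) * (Y * Xᵀ)).trace = ((Yᵀ * Y)ᵀ * (Xᵀ * X)).trace := by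
    rw [Matrix.transpose_mul, Matrix.transpose_transpose]
    exact trace_gram_comm X Y
  have hquart : ((Y * Yᵀ) * (Y * Yᵀ)).trace = ((Yᵀ * Y)ᵀ * (Yᵀ * Y)).trace := by
    rw [Matrix.transpose_mul, Matrix.transpose_transpose]
    exact trace_gram_comm Y Y
  have hval : L Wstar Mstar = val := by
    rw [hLdef, key1 Wstar, key2 Mstar, hc', hc, hW2, hM2, hcross, hquart]
    show _ = (1 / (T : ℝ) ^ 2) * ((Xᵀ * X - Yᵀ * Y)ᵀ * (Xᵀ * X - Yᵀ * Y)).trace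
        - (1 / (T : ℝ) ^ 2) * ((Xᵀ * X)ᵀ * (Xᵀ * X)).trace
    rw [trace_expand (Xᵀ * X) (Yᵀ * Y)]
    field_simp
    ring
  -- EReal assembly
  have hsup : ∀ W, (⨆ M : Matrix (Fin k) (Fin k) ℝ, ((L W M : ℝ) : EReal))
      = ((L W Mstar : ℝ) : EReal) := by
    intro W
    refine le_antisymm (iSup_le fun M => ?_) (le_iSup (fun M => ((L W M : ℝ) : EReal)) Mstar)
    exact_mod_cast hMle W M
  have hinf : (⨅ W : Matrix (Fin k) (Fin n) ℝ, ((L W Mstar : ℝ) : EReal))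
      = ((L Wstar Mstar : ℝ) : EReal) := by
    refine le_antisymm (iInf_le _ Wstar) (le_iInf fun W => ?_)
    exact_mod_cast hWle W
  refine ⟨?_, ?_, (hsup Wstar).symm⟩
  · simp only [hsup]
    rw [hinf, hval]
  · rw [hsup Wstar, hval]
end

section
/- Let C ∈ ℝ^{n×n}, let M ∈ ℝ^{k×k} be invertible, let W ∈ ℝ^{k×n}, and set F := M⁻¹·W. Suppose the PSP fixed-point equations hold: W = F·C and M = F·C·Fᵀ. Then the neural filters are orthonormal: F·Fᵀ = I_k (the k×k identity matrix). -/
open Matrix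

/-- At a fixed point of the offline PSP dynamics (`W = FC`, `M = FCFᵀ` with
`F = M⁻¹W` and `M` invertible), the neural filters are orthonormal:
`FFᵀ = I`. -/
theorem psp_fixed_point_filters_orthonormal {n k : ℕ}
    (C : Matrix (Fin n) (Fin n) ℝ) (M : Matrix (Fin k) (Fin k) ℝ)
    (W F : Matrix (Fin k) (Fin n) ℝ)
    (hM : IsUnit M) (hF : F = M⁻¹ * W)
    (hW : W = F * C) (hMfp : M = F * C * Fᵀ) :
    F * Fᵀ = 1 := by
  have hinv : M⁻¹ * M = 1 := nonsing_inv_mul M ((isUnit_iff_isUnit_det M).mp hM)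
  calc F * Fᵀ = M⁻¹ * W * Fᵀ := by rw [hF]
    _ = M⁻¹ * (F * C * Fᵀ) := by rw [hW, Matrix.mul_assoc, Matrix.mul_assoc]
    _ = M⁻¹ * M := by rw [← hMfp]
    _ = 1 := hinv
end

section
/- Let C ∈ ℝ^{n×n}, let F ∈ ℝ^{k×n} satisfy F·Fᵀ = I_k and (Fᵀ·F)·C = C·(Fᵀ·F), and set M := F·C·Fᵀ. Suppose v ∈ ℝ^k is a nonzero vector with M·v = λ·v for some real λ. Then Fᵀ·v is nonzero, C·(Fᵀ·v) = λ·(Fᵀ·v), and (Fᵀ·F)·(Fᵀ·v) = Fᵀ·v. In particular, every eigenvalue of M is an eigenvalue of C whose eigenvector lies in the row space of F. -/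
open Matrix

/-- At a PSP fixed point with orthonormal filters (`FFᵀ = I`) whose Gram
matrix `FᵀF` commutes with `C`, every eigenpair `(λ, v)` of `M = FCFᵀ` yields
an eigenvector `Fᵀv ≠ 0` of `C` with the same eigenvalue `λ`, lying in the
row space of `F` (i.e. fixed by `FᵀF`). -/
theorem psp_lateral_eigenvalues {n k : ℕ}
    (C : Matrix (Fin n) (Fin n) ℝ) (F : Matrix (Fin k) (Fin n) ℝ)
    (horth : F * Fᵀ = 1) (hcomm : (Fᵀ * F) * C = C * (Fᵀ * F))
    (M : Matrix (Fin k) (Fin k) ℝ) (hM : M = F * C * Fᵀ)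
    (v : Fin k → ℝ) (hv : v ≠ 0) (lam : ℝ) (heig : M *ᵥ v = lam • v) :
    Fᵀ *ᵥ v ≠ 0 ∧
    C *ᵥ (Fᵀ *ᵥ v) = lam • (Fᵀ *ᵥ v) ∧
    (Fᵀ * F) *ᵥ (Fᵀ *ᵥ v) = Fᵀ *ᵥ v := by
  have hFFv : F *ᵥ (Fᵀ *ᵥ v) = v := by
    rw [mulVec_mulVec, horth, one_mulVec]
  have hfix : (Fᵀ * F) *ᵥ (Fᵀ *ᵥ v) = Fᵀ *ᵥ v := by
    rw [← mulVec_mulVec, hFFv]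
  refine ⟨?_, ?_, hfix⟩
  · intro h
    apply hv
    rw [← hFFv, h, mulVec_zero]
  · have h1 : C *ᵥ (Fᵀ *ᵥ v) = (C * (Fᵀ * F)) *ᵥ (Fᵀ *ᵥ v) := by
      rw [← mulVec_mulVec, hfix]
    have h2 : Fᵀ *ᵥ (M *ᵥ v) = lam • (Fᵀ *ᵥ v) := by
      rw [heig, mulVec_smul]
    calc C *ᵥ (Fᵀ *ᵥ v) = (C * (Fᵀ * F)) *ᵥ (Fᵀ *ᵥ v) := h1
      _ = Fᵀ *ᵥ (M *ᵥ v) := by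
          simp only [mulVec_mulVec]
          rw [hM, ← hcomm]
          rw [Matrix.mul_assoc, Matrix.mul_assoc, Matrix.mul_assoc]
      _ = lam • (Fᵀ *ᵥ v) := h2
end

section
/- Let σ_i, σ_j be positive reals and τ > 0, and set γ := σ_i/σ_j + σ_j/σ_i. Define the 2×2 real matrix H with entries: H₁₁ = (1 − 1/(2τ))·(σ_j − σ_i)·(1/σ_i − 1/σ_j) − 1/τ; H₁₂ = (1/τ)·(σ_j + σ_i); H₂₁ = (1 − 1/(2τ))·[(σ_j/σ_i − σ_i/σ_j)·(τ − 1/2)·(1/σ_i − 1/σ_j) − (1/σ_i + 1/σ_j)]; H₂₂ = (1 − 1/(2τ))·(σ_j/σ_i + σ_i/σ_j + 2) − 4. Then Tr(H) = −4 + (2 − 1/τ)·γ − 1/τ and det(H) = 8 + (2/τ − 4)·γ. Moreover: Tr(H) < 0 if and only if τ < (1 + 1/γ)/(2 − 4/γ) (interpreted as always true when σ_i = σ_j, i.e. γ = 2), det(H) > 0 if and only if τ < 1/(2 − 4/γ) (always true when γ = 2), and det(H) > 0 implies Tr(H) < 0. -/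
open Matrix

lemma trace_lt_iff_aux {γ τ : ℝ} (hτ : 0 < τ) (hγ : 2 < γ) :
    -4 + (2 - 1 / τ) * γ - 1 / τ < 0 ↔ τ < (1 + 1 / γ) / (2 - 4 / γ) := by
  have hγ0 : 0 < γ := by linarith
  have h2 : 0 < 2 - 4 / γ := by
    rw [sub_pos, div_lt_iff₀ hγ0]; linarith
  rw [lt_div_iff₀ h2]
  have e1 : -4 + (2 - 1 / τ) * γ - 1 / τ = (2*τ*γ - 4*τ - γ - 1) / τ := by
    field_simp; ring
  have e2 : τ * (2 - 4 / γ) = (1 + 1/γ) + (2*τ*γ - 4*τ - γ - 1) / γ := by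
    field_simp; ring
  have k1 : (2*τ*γ - 4*τ - γ - 1) / τ < 0 ↔ (2*τ*γ - 4*τ - γ - 1) < 0 := by
    rw [div_lt_iff₀ hτ, zero_mul]
  have k2 : (2*τ*γ - 4*τ - γ - 1) / γ < 0 ↔ (2*τ*γ - 4*τ - γ - 1) < 0 := by
    rw [div_lt_iff₀ hγ0, zero_mul]
  rw [e1, e2, k1]
  constructor
  · intro h; linarith [k2.mpr h]
  · intro h; exact k2.mp (by linarith)

lemma det_pos_iff_aux {γ τ : ℝ} (hτ : 0 < τ) (hγ : 2 < γ) :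
    0 < 8 + (2 / τ - 4) * γ ↔ τ < 1 / (2 - 4 / γ) := by
  have hγ0 : 0 < γ := by linarith
  have h2 : 0 < 2 - 4 / γ := by
    rw [sub_pos, div_lt_iff₀ hγ0]; linarith
  rw [lt_div_iff₀ h2]
  have e1 : 8 + (2 / τ - 4) * γ = (8*τ + 2*γ - 4*τ*γ) / τ := by
    field_simp; ring
  have e2 : τ * (2 - 4 / γ) = 1 - (8*τ + 2*γ - 4*τ*γ) / (2*γ) := by
    field_simp; ring
  have k1 : 0 < (8*τ + 2*γ - 4*τ*γ) / τ ↔ 0 < 8*τ + 2*γ - 4*τ*γ := by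
    rw [lt_div_iff₀ hτ, zero_mul]
  have k2 : 0 < (8*τ + 2*γ - 4*τ*γ) / (2*γ) ↔ 0 < 8*τ + 2*γ - 4*τ*γ := by
    rw [lt_div_iff₀ (by linarith : (0:ℝ) < 2*γ), zero_mul]
  rw [e1, e2, k1]
  constructor
  · intro h; linarith [k2.mpr h]
  · intro h; exact k2.mp (by linarith)

/-- Trace/determinant and linear-stability conditions for the 2×2 PSP
linearization block `H^{ij}`: with `γ = σᵢ/σⱼ + σⱼ/σᵢ`,
`Tr H = −4 + (2 − 1/τ)γ − 1/τ`, `det H = 8 + (2/τ − 4)γ`;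
`Tr H < 0 ↔ τ < (1 + 1/γ)/(2 − 4/γ)` and `det H > 0 ↔ τ < 1/(2 − 4/γ)`
(both conditions holding unconditionally when `σᵢ = σⱼ`, i.e. `γ = 2`), and
`det H > 0` implies `Tr H < 0`. -/
theorem psp_stability_block {σi σj τ : ℝ}
    (hσi : 0 < σi) (hσj : 0 < σj) (hτ : 0 < τ) :
    let γ : ℝ := σi / σj + σj / σi
    let H : Matrix (Fin 2) (Fin 2) ℝ :=
      !![(1 - 1 / (2 * τ)) * (σj - σi) * (1 / σi - 1 / σj) - 1 / τ,
          (1 / τ) * (σj + σi);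
         (1 - 1 / (2 * τ)) * ((σj / σi - σi / σj) * (τ - 1 / 2) * (1 / σi - 1 / σj)
            - (1 / σi + 1 / σj)),
          (1 - 1 / (2 * τ)) * (σj / σi + σi / σj + 2) - 4]
    H.trace = -4 + (2 - 1 / τ) * γ - 1 / τ ∧
    H.det = 8 + (2 / τ - 4) * γ ∧
    (σi = σj → H.trace < 0) ∧
    (σi ≠ σj → (H.trace < 0 ↔ τ < (1 + 1 / γ) / (2 - 4 / γ))) ∧
    (σi = σj → 0 < H.det) ∧
    (σi ≠ σj → (0 < H.det ↔ τ < 1 / (2 - 4 / γ))) ∧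
    (0 < H.det → H.trace < 0) := by
  intro γ H
  have hi := hσi.ne'
  have hj := hσj.ne'
  have ht := hτ.ne'
  have htr : H.trace = -4 + (2 - 1 / τ) * γ - 1 / τ := by
    show (Matrix.trace !![_, _; _, _]) = _
    rw [Matrix.trace_fin_two_of]
    show _ = -4 + (2 - 1 / τ) * (σi / σj + σj / σi) - 1 / τ
    field_simp
    ring
  have hdet : H.det = 8 + (2 / τ - 4) * γ := by
    show (Matrix.det !![_, _; _, _]) = _
    rw [Matrix.det_fin_two_of]
    show _ = 8 + (2 / τ - 4) * (σi / σj + σj / σi)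
    field_simp
    ring
  have hγeq : σi = σj → γ = 2 := by
    intro h; show σi / σj + σj / σi = 2; rw [h]; field_simp; norm_num
  have hγgt : σi ≠ σj → 2 < γ := by
    intro h
    have hne := sub_ne_zero.mpr h
    have h1 : 0 < (σi - σj)^2 := by positivity
    have : γ = 2 + (σi - σj)^2 / (σi * σj) := by
      show σi / σj + σj / σi = _
      field_simp; ring
    rw [this]
    have := div_pos h1 (mul_pos hσi hσj)
    linarith
  refine ⟨htr, hdet, ?_, ?_, ?_, ?_, ?_⟩
  · intro h
    rw [htr, hγeq h]
    have : -4 + (2 - 1 / τ) * 2 - 1 / τ = -(3 / τ) := by ring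
    rw [this]
    have h3 : 0 < 3 / τ := by positivity
    linarith
  · intro h
    rw [htr]
    exact trace_lt_iff_aux hτ (hγgt h)
  · intro h
    rw [hdet, hγeq h]
    have : 8 + (2 / τ - 4) * 2 = 4 / τ := by ring
    rw [this]
    positivity
  · intro h
    rw [hdet]
    exact det_pos_iff_aux hτ (hγgt h)
  · intro hd
    rw [hdet] at hd
    rw [htr]
    by_cases h : σi = σj
    · rw [hγeq h]
      have : -4 + (2 - 1 / τ) * 2 - 1 / τ = -(3 / τ) := by ring
      rw [this]
      have h3 : 0 < 3 / τ := by positivity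
      linarith
    · have hγ := hγgt h
      rw [trace_lt_iff_aux hτ hγ]
      have := (det_pos_iff_aux hτ hγ).mp hd
      have hγ0 : 0 < γ := by linarith
      have h2 : 0 < 2 - 4 / γ := by rw [sub_pos, div_lt_iff₀ hγ0]; linarith
      calc τ < 1 / (2 - 4 / γ) := this
        _ ≤ (1 + 1 / γ) / (2 - 4 / γ) := by
            have h1 : (1:ℝ) ≤ 1 + 1 / γ := by
              have := one_div_nonneg.mpr hγ0.le
              linarith
            gcongr
end

section
/- Let k ≤ T be positive integers and A ∈ ℝ^{k×T}. Then the minimum of −(2/T)·Tr(Aᵀ·Y) over all Y ∈ ℝ^{k×T} satisfying (1/T)·Y·Yᵀ = I_k equals −2·Tr(S), where S is the unique positive semidefinite square root of (1/T)·A·Aᵀ (equivalently, the minimum equals −(2/√T)·Tr((A·Aᵀ)^{1/2})); in particular the constrained infimum is attained. -/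
open Matrix

private lemma psw_aux_exists_U {k T : ℕ} (hkT : k ≤ T)
    (C : Matrix (Fin k) (Fin T) ℝ) (d : Fin k → ℝ)
    (hCC : C * Cᵀ = Matrix.diagonal (fun i => d i ^ 2)) :
    ∃ U : Matrix (Fin k) (Fin T) ℝ, U * Uᵀ = 1 ∧ C = Matrix.diagonal d * U := by
  classical
  have hC0 : ∀ j, d j = 0 → ∀ t, C j t = 0 := by
    intro j hj t
    have hsum : ∑ t : Fin T, C j t * C j t = 0 := by
      have := congrFun (congrFun hCC j) j
      simpa [Matrix.mul_apply, hj] using this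
    have := (Finset.sum_eq_zero_iff_of_nonneg
      (fun t _ => mul_self_nonneg (C j t))).mp hsum t (Finset.mem_univ t)
    exact mul_self_eq_zero.mp this
  set w : Fin k → EuclideanSpace ℝ (Fin T) :=
    fun j => (d j)⁻¹ • (WithLp.equiv 2 (Fin T → ℝ)).symm (C j) with hwdef
  have hwapp : ∀ j t, w j t = (d j)⁻¹ * C j t := by intro j t; rfl
  have hinner : ∀ a b : Fin k, d a ≠ 0 → d b ≠ 0 →
      inner ℝ (w a) (w b) = if a = b then 1 else 0 := by
    intro a b ha hb
    have h1 : inner ℝ (w a) (w b) = ∑ t : Fin T, w a t * w b t := by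
      simp [PiLp.inner_apply, RCLike.inner_apply, conj_trivial]
      exact Finset.sum_congr rfl fun _ _ => mul_comm _ _
    rw [h1]
    have h2 : ∑ t : Fin T, w a t * w b t = (d a)⁻¹ * (d b)⁻¹ * ∑ t, C a t * C b t := by
      rw [Finset.mul_sum]; apply Finset.sum_congr rfl; intro t _
      rw [hwapp, hwapp]; ring
    have h3 : ∑ t : Fin T, C a t * C b t = (C * Cᵀ) a b := by
      simp [Matrix.mul_apply]
    rw [h2, h3, hCC]
    by_cases hab : a = b
    · subst hab
      simp only [Matrix.diagonal_apply_eq, if_pos rfl]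
      field_simp
      simp
    · simp [Matrix.diagonal_apply_ne _ hab, hab]
  set f : Fin k → Fin T := Fin.castLE hkT with hfdef
  have hf : Function.Injective f := Fin.castLE_injective hkT
  set s : Set (Fin T) := {t | ∃ j, d j ≠ 0 ∧ f j = t} with hsdef
  set vv : Fin T → EuclideanSpace ℝ (Fin T) :=
    fun t => if h : ∃ j, d j ≠ 0 ∧ f j = t then w h.choose else 0 with hvvdef
  have hvv : ∀ j, d j ≠ 0 → vv (f j) = w j := by
    intro j hj
    have h : ∃ j', d j' ≠ 0 ∧ f j' = f j := ⟨j, hj, rfl⟩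
    have h2 : vv (f j) = w h.choose := dif_pos h
    rw [h2]
    exact congrArg w (hf h.choose_spec.2)
  have horth : Orthonormal ℝ (s.restrict vv) := by
    rw [orthonormal_iff_ite]
    rintro ⟨t₁, h₁⟩ ⟨t₂, h₂⟩
    obtain ⟨a, ha, rfl⟩ := h₁
    obtain ⟨b, hb, rfl⟩ := h₂
    show inner ℝ (vv (f a)) (vv (f b)) = _
    rw [hvv a ha, hvv b hb, hinner a b ha hb]
    congr 1
    simp only [Subtype.mk.injEq, eq_iff_iff]
    exact ⟨fun h => congrArg f h, fun h => hf h⟩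
  obtain ⟨bb, hbb⟩ := horth.exists_orthonormalBasis_extension_of_card_eq
    (by simp [finrank_euclideanSpace])
  set w' : Fin k → EuclideanSpace ℝ (Fin T) := fun j => bb (f j) with hw'def
  have horth' : Orthonormal ℝ w' := bb.orthonormal.comp f hf
  have hw' : ∀ j, d j ≠ 0 → w' j = w j := by
    intro j hj
    rw [hw'def]; dsimp only
    rw [hbb (f j) ⟨j, hj, rfl⟩]
    exact hvv j hj
  refine ⟨Matrix.of (fun j t => w' j t), ?_, ?_⟩
  · ext i j
    have h := orthonormal_iff_ite.mp horth' i j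
    have h2 : inner ℝ (w' i) (w' j) = ∑ t : Fin T, w' i t * w' j t := by
      simp [PiLp.inner_apply, RCLike.inner_apply, conj_trivial]
      exact Finset.sum_congr rfl fun _ _ => mul_comm _ _
    rw [h2] at h
    simp only [Matrix.mul_apply, Matrix.of_apply, Matrix.transpose_apply, Matrix.one_apply]
    exact h
  · ext j t
    have hd : (Matrix.diagonal d * Matrix.of (fun j t => w' j t)) j t
        = d j * w' j t := by
      simp [Matrix.mul_apply, Matrix.diagonal_apply, Finset.sum_ite_eq]
    rw [hd]
    by_cases hj : d j = 0
    · rw [hC0 j hj t, hj, zero_mul]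
    · rw [hw' j hj, hwapp]
      field_simp

private lemma psw_aux_lower {k T : ℕ}
    (B U Uy : Matrix (Fin k) (Fin T) ℝ) (V : Matrix (Fin k) (Fin k) ℝ) (d : Fin k → ℝ)
    (hdnn : ∀ i, 0 ≤ d i) (hVtV : Vᵀ * V = 1)
    (hBt : Bᵀ = Uᵀ * Matrix.diagonal d * Vᵀ)
    (hUU : U * Uᵀ = 1) (hUyUy : Uy * Uyᵀ = 1) :
    (Bᵀ * Uy).trace ≤ ∑ j, d j := by
  have htr : (Bᵀ * Uy).trace = (Matrix.diagonal d * (Vᵀ * Uy * Uᵀ)).trace := by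
    rw [hBt]
    rw [Matrix.mul_assoc, Matrix.mul_assoc]
    rw [Matrix.trace_mul_comm (Uᵀ) (Matrix.diagonal d * (Vᵀ * Uy))]
    rw [Matrix.mul_assoc, Matrix.trace_mul_comm]
  rw [htr]
  set M : Matrix (Fin k) (Fin k) ℝ := Vᵀ * Uy * Uᵀ with hMdef
  have hMle : ∀ j, M j j ≤ 1 := by
    intro j
    have hcs : (∑ t, (Vᵀ * Uy) j t * Uᵀ t j) ^ 2 ≤
        (∑ t, ((Vᵀ * Uy) j t) ^ 2) * (∑ t, (Uᵀ t j) ^ 2) :=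
      Finset.sum_mul_sq_le_sq_mul_sq _ _ _
    have h1 : (∑ t, ((Vᵀ * Uy) j t) ^ 2) = 1 := by
      have he : (∑ t, ((Vᵀ * Uy) j t) ^ 2) = ((Vᵀ * Uy) * (Vᵀ * Uy)ᵀ) j j := by
        simp [Matrix.mul_apply, pow_two, mul_comm]
      rw [he]
      have h2 : (Vᵀ * Uy) * (Vᵀ * Uy)ᵀ = 1 := by
        rw [Matrix.transpose_mul, Matrix.transpose_transpose]
        calc Vᵀ * Uy * (Uyᵀ * V) = Vᵀ * (Uy * Uyᵀ) * V := by
              simp only [Matrix.mul_assoc]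
          _ = 1 := by rw [hUyUy, Matrix.mul_one, hVtV]
      rw [h2, Matrix.one_apply_eq]
    have h2 : (∑ t, (Uᵀ t j) ^ 2) = 1 := by
      have he : (∑ t, (Uᵀ t j) ^ 2) = (U * Uᵀ) j j := by
        simp [Matrix.mul_apply, pow_two]
      rw [he, hUU, Matrix.one_apply_eq]
    have hM : M j j = ∑ t, (Vᵀ * Uy) j t * Uᵀ t j := by
      rw [hMdef, Matrix.mul_apply]
    rw [h1, h2] at hcs
    rw [hM]
    nlinarith [hcs]
  have htrd : (Matrix.diagonal d * M).trace = ∑ j, d j * M j j := by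
    rw [Matrix.trace]
    apply Finset.sum_congr rfl
    intro j _
    simp [Matrix.diag, Matrix.mul_apply, Matrix.diagonal_apply, Finset.sum_ite_eq]
  rw [htrd]
  apply Finset.sum_le_sum
  intro j _
  calc d j * M j j ≤ d j * 1 := mul_le_mul_of_nonneg_left (hMle j) (hdnn j)
    _ = d j := mul_one _

/-- The constrained minimum of `−(2/T) Tr(AᵀY)` over matrices `Y` satisfying
the whitening constraint `(1/T) Y Yᵀ = I` is attained and equals `−2 Tr S`,
where `S` is the positive semidefinite square root of `(1/T) A Aᵀ`. -/
theorem psw_constrained_min (k T : ℕ) (hk : 0 < k) (hkT : k ≤ T)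
    (A : Matrix (Fin k) (Fin T) ℝ)
    (S : Matrix (Fin k) (Fin k) ℝ) (hS : S.PosSemidef)
    (hS2 : S ^ 2 = (1 / (T : ℝ)) • (A * Aᵀ)) :
    IsLeast
      {r : ℝ | ∃ Y : Matrix (Fin k) (Fin T) ℝ,
        (1 / (T : ℝ)) • (Y * Yᵀ) = 1 ∧ r = -(2 / (T : ℝ)) * (Aᵀ * Y).trace}
      (-2 * S.trace) := by
  classical
  have hT : (0:ℝ) < T := by exact_mod_cast lt_of_lt_of_le hk hkT
  have hTne : (T:ℝ) ≠ 0 := ne_of_gt hT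
  have hsq : Real.sqrt T * Real.sqrt T = T := Real.mul_self_sqrt hT.le
  have hsqne : Real.sqrt T ≠ 0 := ne_of_gt (Real.sqrt_pos.mpr hT)
  have hinv : (Real.sqrt T)⁻¹ * (Real.sqrt T)⁻¹ = 1 / (T:ℝ) := by
    rw [← mul_inv, hsq]; norm_num
  -- spectral data
  have hH : S.IsHermitian := hS.1
  obtain ⟨V, d, hdnn, hVtV, hVVt, hSpec⟩ :
      ∃ (V : Matrix (Fin k) (Fin k) ℝ) (d : Fin k → ℝ), (∀ i, 0 ≤ d i) ∧
        Vᵀ * V = 1 ∧ V * Vᵀ = 1 ∧ S = V * Matrix.diagonal d * Vᵀ := by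
    refine ⟨(hH.eigenvectorUnitary : Matrix (Fin k) (Fin k) ℝ), hH.eigenvalues,
      hS.eigenvalues_nonneg, ?_, ?_, ?_⟩
    · have := Matrix.mem_unitaryGroup_iff'.mp hH.eigenvectorUnitary.2
      simpa [Matrix.star_eq_conjTranspose, Matrix.conjTranspose_eq_transpose_of_trivial] using this
    · have := Matrix.mem_unitaryGroup_iff.mp hH.eigenvectorUnitary.2
      simpa [Matrix.star_eq_conjTranspose, Matrix.conjTranspose_eq_transpose_of_trivial] using this
    · have := hH.spectral_theorem
      simpa [Matrix.star_eq_conjTranspose, Matrix.conjTranspose_eq_transpose_of_trivial] using this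
  have htrS : S.trace = ∑ j, d j := by
    rw [hSpec, Matrix.trace_mul_comm, ← Matrix.mul_assoc, hVtV, Matrix.one_mul,
      Matrix.trace_diagonal]
  -- whitened matrix
  obtain ⟨B, hBdef⟩ : ∃ B : Matrix (Fin k) (Fin T) ℝ, B = (Real.sqrt T)⁻¹ • A := ⟨_, rfl⟩
  have hAB : A = Real.sqrt T • B := by
    rw [hBdef, smul_smul, mul_inv_cancel₀ hsqne, one_smul]
  have hBB : B * Bᵀ = S ^ 2 := by
    rw [hS2, hBdef]
    rw [Matrix.transpose_smul, Matrix.smul_mul, Matrix.mul_smul, smul_smul, hinv]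
  obtain ⟨C, hCdef⟩ : ∃ C : Matrix (Fin k) (Fin T) ℝ, C = Vᵀ * B := ⟨_, rfl⟩
  have hBC : B = V * C := by rw [hCdef, ← Matrix.mul_assoc, hVVt, Matrix.one_mul]
  have hCC : C * Cᵀ = Matrix.diagonal (fun i => d i ^ 2) := by
    have h1 : C * Cᵀ = Vᵀ * (B * Bᵀ) * V := by
      rw [hCdef]; simp only [Matrix.transpose_mul, Matrix.transpose_transpose, Matrix.mul_assoc]
    rw [h1, hBB, hSpec]
    have h2 : (V * Matrix.diagonal d * Vᵀ) ^ 2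
        = V * (Matrix.diagonal d * Matrix.diagonal d) * Vᵀ := by
      rw [pow_two]
      calc V * Matrix.diagonal d * Vᵀ * (V * Matrix.diagonal d * Vᵀ)
          = V * Matrix.diagonal d * (Vᵀ * V) * Matrix.diagonal d * Vᵀ := by
            simp only [Matrix.mul_assoc]
        _ = V * (Matrix.diagonal d * Matrix.diagonal d) * Vᵀ := by
            rw [hVtV]; simp only [Matrix.mul_one, Matrix.mul_assoc]
    rw [h2]
    calc Vᵀ * (V * (Matrix.diagonal d * Matrix.diagonal d) * Vᵀ) * V
        = (Vᵀ * V) * (Matrix.diagonal d * Matrix.diagonal d) * (Vᵀ * V) := by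
          simp only [Matrix.mul_assoc]
      _ = Matrix.diagonal (fun i => d i ^ 2) := by
          rw [hVtV]; simp [Matrix.diagonal_mul_diagonal, pow_two]
  obtain ⟨U, hUU, hCU⟩ := psw_aux_exists_U hkT C d hCC
  have hBt : Bᵀ = Uᵀ * Matrix.diagonal d * Vᵀ := by
    rw [hBC, hCU]
    simp [Matrix.transpose_mul, Matrix.diagonal_transpose, Matrix.mul_assoc]
  constructor
  · -- membership : the optimal Y
    refine ⟨Real.sqrt T • (V * U), ?_, ?_⟩
    · have hprod : V * U * (V * U)ᵀ = 1 := by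
        rw [Matrix.transpose_mul]
        calc V * U * (Uᵀ * Vᵀ) = V * (U * Uᵀ) * Vᵀ := by
              simp only [Matrix.mul_assoc]
          _ = 1 := by rw [hUU, Matrix.mul_one, hVVt]
      rw [Matrix.transpose_smul, Matrix.smul_mul, Matrix.mul_smul, hprod,
        smul_smul, smul_smul, mul_assoc, hsq, one_div_mul_cancel hTne, one_smul]
    · have h1 : Aᵀ * (Real.sqrt T • (V * U)) = (T:ℝ) • (Bᵀ * (V * U)) := by
        rw [hAB, Matrix.transpose_smul, Matrix.smul_mul, Matrix.mul_smul, smul_smul, hsq]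
      have h2 : Bᵀ * (V * U) = Uᵀ * Matrix.diagonal d * U := by
        rw [hBt]
        calc Uᵀ * Matrix.diagonal d * Vᵀ * (V * U)
            = Uᵀ * Matrix.diagonal d * (Vᵀ * V) * U := by simp only [Matrix.mul_assoc]
          _ = Uᵀ * Matrix.diagonal d * U := by rw [hVtV, Matrix.mul_one]
      have h3 : (Uᵀ * Matrix.diagonal d * U).trace = ∑ j, d j := by
        rw [Matrix.mul_assoc, Matrix.trace_mul_comm, Matrix.mul_assoc, hUU, Matrix.mul_one,
          Matrix.trace_diagonal]
      rw [htrS, h1, Matrix.trace_smul, smul_eq_mul, h2, h3]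
      field_simp
  · -- lower bound
    rintro r ⟨Y, hY, rfl⟩
    obtain ⟨Uy, hUydef⟩ : ∃ Uy : Matrix (Fin k) (Fin T) ℝ, Uy = (Real.sqrt T)⁻¹ • Y := ⟨_, rfl⟩
    have hUyUy : Uy * Uyᵀ = 1 := by
      rw [hUydef, Matrix.transpose_smul, Matrix.smul_mul, Matrix.mul_smul, smul_smul, hinv]
      exact hY
    have htrAY : (Aᵀ * Y).trace = (T:ℝ) * (Bᵀ * Uy).trace := by
      have hY' : Y = Real.sqrt T • Uy := by
        rw [hUydef, smul_smul, mul_inv_cancel₀ hsqne, one_smul]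
      rw [hAB, hY', Matrix.transpose_smul, Matrix.smul_mul, Matrix.mul_smul, smul_smul, hsq,
        Matrix.trace_smul, smul_eq_mul]
    have hcore : (Bᵀ * Uy).trace ≤ ∑ j, d j :=
      psw_aux_lower B U Uy V d hdnn hVtV hBt hUU hUyUy
    rw [htrAY, htrS]
    have h2 : -(2 / (T:ℝ)) * ((T:ℝ) * (Bᵀ * Uy).trace) = -2 * (Bᵀ * Uy).trace := by
      field_simp
    rw [h2]
    have := mul_le_mul_of_nonneg_left hcore (by norm_num : (0:ℝ) ≤ 2)
    linarith
end

section
/- Let k ≤ T be positive integers and A ∈ ℝ^{k×T} have rank k (full row rank). Then the supremum over symmetric positive definite matrices M ∈ ℝ^{k×k} of −(1/T)·Tr(Aᵀ·M⁻¹·A) − Tr(M) equals −2·Tr(S), where S is the unique positive definite square root of (1/T)·A·Aᵀ; moreover the supremum is attained exactly at M = S. -/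
open Matrix

section Aux

variable {k : ℕ}

private lemma trace_tmul_eq_zero {B : Matrix (Fin k) (Fin k) ℝ}
    (h : (Bᴴ * B).trace = 0) : B = 0 := by
  rw [← Matrix.conjTranspose_mul_self_eq_zero (A := B)]
  have hdiag : ∀ i, (Bᴴ * B).diag i = ∑ j, (B j i) ^ 2 := by
    intro i
    simp [Matrix.diag, Matrix.mul_apply, Matrix.conjTranspose_apply, sq]
  have hnn : ∀ i ∈ Finset.univ, (0:ℝ) ≤ (Bᴴ * B).diag i := by
    intro i _
    rw [hdiag]
    exact Finset.sum_nonneg fun j _ => sq_nonneg _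
  have hz : ∀ i ∈ (Finset.univ : Finset (Fin k)), (Bᴴ * B).diag i = 0 :=
    (Finset.sum_eq_zero_iff_of_nonneg hnn).mp h
  have hB : B = 0 := by
    ext i j
    have := hz j (Finset.mem_univ j)
    rw [hdiag] at this
    have := (Finset.sum_eq_zero_iff_of_nonneg (fun l _ => sq_nonneg (B l j))).mp this
      i (Finset.mem_univ i)
    simpa [sq] using pow_eq_zero_iff (n := 2) (by norm_num) |>.mp this
  rw [hB]; simp

open scoped MatrixOrder Matrix.Norms.L2Operator in
private lemma exists_eq_conjTranspose_mul_self_aux {N : Matrix (Fin k) (Fin k) ℝ}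
    (h : N.PosSemidef) : ∃ B : Matrix (Fin k) (Fin k) ℝ, N = Bᴴ * B := by
  obtain ⟨B, hB⟩ := CStarAlgebra.nonneg_iff_eq_star_mul_self.mp h.nonneg
  exact ⟨B, hB⟩

/-- key algebraic identity -/
private lemma key_identity {S M : Matrix (Fin k) (Fin k) ℝ}
    (hS : S.PosDef) (hM : M.PosDef) :
    (M⁻¹ * S ^ 2).trace + M.trace - 2 * S.trace
      = ((S - M)ᵀ * M⁻¹ * (S - M)).trace := by
  have hMdet : IsUnit M.det := M.isUnit_iff_isUnit_det.mp hM.isUnit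
  have hSsym : Sᵀ = S := hS.isHermitian
  have hMsym : Mᵀ = M := hM.isHermitian
  have h1 : M⁻¹ * M = 1 := Matrix.nonsing_inv_mul M hMdet
  have h2 : M * M⁻¹ = 1 := Matrix.mul_nonsing_inv M hMdet
  have expand : (S - M)ᵀ * M⁻¹ * (S - M)
      = S * M⁻¹ * S - S * (M⁻¹ * M) - (M * M⁻¹) * S + (M * M⁻¹) * M := by
    rw [Matrix.transpose_sub, hSsym, hMsym]
    noncomm_ring
  rw [expand, h1, h2]
  have h3 : (S * M⁻¹ * S).trace = (M⁻¹ * S ^ 2).trace := by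
    rw [Matrix.trace_mul_comm, ← Matrix.mul_assoc, Matrix.trace_mul_comm, ← sq]
  simp only [Matrix.trace_add, Matrix.trace_sub, h3, Matrix.one_mul, Matrix.mul_one]
  ring

private lemma value_eq {T : ℕ} (hT : 0 < T) {A : Matrix (Fin k) (Fin T) ℝ}
    {S : Matrix (Fin k) (Fin k) ℝ}
    (hS2 : S ^ 2 = (1 / (T : ℝ)) • (A * Aᵀ))
    (M : Matrix (Fin k) (Fin k) ℝ) :
    -(1 / (T : ℝ)) * (Aᵀ * M⁻¹ * A).trace - M.trace
      = -((M⁻¹ * S ^ 2).trace + M.trace) := by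
  have hT' : (T : ℝ) ≠ 0 := Nat.cast_ne_zero.mpr hT.ne'
  have h1 : (Aᵀ * M⁻¹ * A).trace = (M⁻¹ * (A * Aᵀ)).trace := by
    rw [Matrix.trace_mul_comm, ← Matrix.mul_assoc, Matrix.trace_mul_comm]
  have h2 : M⁻¹ * S ^ 2 = (1 / (T : ℝ)) • (M⁻¹ * (A * Aᵀ)) := by
    rw [hS2, Matrix.mul_smul]
  rw [h1, h2, Matrix.trace_smul]
  simp only [smul_eq_mul]
  ring

private lemma main_ineq {T : ℕ} (hT : 0 < T) {A : Matrix (Fin k) (Fin T) ℝ}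
    {S : Matrix (Fin k) (Fin k) ℝ} (hS : S.PosDef)
    (hS2 : S ^ 2 = (1 / (T : ℝ)) • (A * Aᵀ))
    {M : Matrix (Fin k) (Fin k) ℝ} (hM : M.PosDef) :
    -(1 / (T : ℝ)) * (Aᵀ * M⁻¹ * A).trace - M.trace
      = -2 * S.trace - ((S - M)ᵀ * M⁻¹ * (S - M)).trace := by
  rw [value_eq hT hS2 M]
  have := key_identity hS hM
  linarith

end Aux

/-- For full row rank `A`, the supremum over symmetric positive definite `M`
of `−(1/T) Tr(AᵀM⁻¹A) − Tr(M)` equals `−2 Tr S`, where `S` is the positive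
definite square root of `(1/T) A Aᵀ`; the supremum is attained exactly at
`M = S`. -/
theorem psw_maxmin_posdef (k T : ℕ) (hk : 0 < k) (hkT : k ≤ T)
    (A : Matrix (Fin k) (Fin T) ℝ) (hA : A.rank = k)
    (S : Matrix (Fin k) (Fin k) ℝ) (hS : S.PosDef)
    (hS2 : S ^ 2 = (1 / (T : ℝ)) • (A * Aᵀ)) :
    IsGreatest
      {r : ℝ | ∃ M : Matrix (Fin k) (Fin k) ℝ, M.PosDef ∧
        r = -(1 / (T : ℝ)) * (Aᵀ * M⁻¹ * A).trace - M.trace}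
      (-2 * S.trace) ∧
    (∀ M : Matrix (Fin k) (Fin k) ℝ, M.PosDef →
      -(1 / (T : ℝ)) * (Aᵀ * M⁻¹ * A).trace - M.trace = -2 * S.trace →
      M = S) := by
  have hT : 0 < T := lt_of_lt_of_le hk hkT
  -- positivity of the deficit term, and equality case
  have hrest : ∀ M : Matrix (Fin k) (Fin k) ℝ, M.PosDef →
      (0 ≤ ((S - M)ᵀ * M⁻¹ * (S - M)).trace ∧
       (((S - M)ᵀ * M⁻¹ * (S - M)).trace = 0 → M = S)) := by
    intro M hM
    have hMinv : (M⁻¹).PosDef := hM.inv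
    constructor
    · -- nonneg
      have hps : ((S - M)ᴴ * M⁻¹ * (S - M)).PosSemidef :=
        hMinv.posSemidef.conjTranspose_mul_mul_same (S - M)
      have hconj : (S - M)ᴴ = (S - M)ᵀ := rfl
      rw [← hconj]
      rw [Matrix.trace]
      refine Finset.sum_nonneg fun i _ => ?_
      have := hps.dotProduct_mulVec_nonneg (Pi.single i 1)
      have hdiag : ((S - M)ᴴ * M⁻¹ * (S - M)).diag i
          = Pi.single i 1 ⬝ᵥ ((S - M)ᴴ * M⁻¹ * (S - M)) *ᵥ Pi.single i 1 := by
        simp [Matrix.mulVec_single, dotProduct, Pi.single_apply, Matrix.diag]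
      rw [hdiag]
      simpa using this
    · intro h0
      -- the posSemidef matrix has zero trace, hence is zero
      have hconj : (S - M)ᴴ = (S - M)ᵀ := rfl
      set D := S - M with hD
      -- write M⁻¹ = R * R with R = sqrt
      obtain ⟨B, hB⟩ := exists_eq_conjTranspose_mul_self_aux hMinv.posSemidef
      have hkey : Dᵀ * M⁻¹ * D = (B * D)ᴴ * (B * D) := by
        rw [hB, ← hconj]
        simp only [Matrix.conjTranspose_mul, Matrix.conjTranspose_conjTranspose]
        noncomm_ring
      rw [hkey] at h0
      have hBD : B * D = 0 := trace_tmul_eq_zero h0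
      -- D = 0 follows: Dᵀ M⁻¹ D = 0, then for each v, M⁻¹ (D v) pairing zero
      have hDMD : Dᵀ * M⁻¹ * D = 0 := by
        rw [hkey, hBD]; simp
      have hDzero : D = 0 := by
        ext i j
        have hv : ∀ v : Fin k → ℝ, D *ᵥ v = 0 := by
          intro v
          by_contra hne
          have hq : 0 < (D *ᵥ v) ⬝ᵥ (M⁻¹ *ᵥ (D *ᵥ v)) := by
            have := hMinv.dotProduct_mulVec_pos hne
            simpa using this
          have hzero : (D *ᵥ v) ⬝ᵥ (M⁻¹ *ᵥ (D *ᵥ v)) = 0 := by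
            have : v ⬝ᵥ ((Dᵀ * M⁻¹ * D) *ᵥ v) = 0 := by rw [hDMD]; simp
            rw [← Matrix.mulVec_mulVec, ← Matrix.mulVec_mulVec,
              Matrix.dotProduct_mulVec v Dᵀ, Matrix.vecMul_transpose] at this
            exact this
          exact absurd hzero hq.ne'
        have := congrFun (hv (Pi.single j 1)) i
        rw [Matrix.mulVec_single] at this
        simpa using this
      have : S - M = 0 := hDzero
      have := sub_eq_zero.mp this
      exact this.symm
  refine ⟨⟨⟨S, hS, ?_⟩, ?_⟩, ?_⟩
  · -- value at S is -2 tr S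
    rw [main_ineq hT hS hS2 hS]
    simp
  · rintro r ⟨M, hM, rfl⟩
    rw [main_ineq hT hS hS2 hM]
    have := (hrest M hM).1
    linarith
  · intro M hM heq
    rw [main_ineq hT hS hS2 hM] at heq
    exact (hrest M hM).2 (by linarith)
end

section
/- Let k ≤ T and n be positive integers, W ∈ ℝ^{k×n}, X ∈ ℝ^{n×T}. Define g(Y, M) := −(2/T)·Tr(Xᵀ·Wᵀ·Y) + Tr(M·((1/T)·Y·Yᵀ − I_k)) for Y ∈ ℝ^{k×T} and M ∈ ℝ^{k×k}. Then, with suprema and infima taken in the extended reals, inf over Y of sup over M of g(Y, M) equals sup over M of inf over Y of g(Y, M), and both equal −2·Tr(S), where S is the unique positive semidefinite square root of (1/T)·W·X·Xᵀ·Wᵀ. -/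
set_option maxHeartbeats 1000000

open Matrix

lemma trace_nonneg_of_psd {m : Type*} [Fintype m] [DecidableEq m]
    {P : Matrix m m ℝ} (hP : P.PosSemidef) : 0 ≤ P.trace := by
  rw [Matrix.trace]
  apply Finset.sum_nonneg
  intro i _
  have := hP.diag_nonneg (i := i)
  simpa [Matrix.diag] using this

lemma trace_mul_self_psd_nonneg {m p : Type*} [Fintype m] [DecidableEq m] [Fintype p]
    {P : Matrix m m ℝ} (hP : P.PosSemidef) (Z : Matrix m p ℝ) :
    0 ≤ (P * (Z * Zᵀ)).trace := by
  classical
  rw [← Matrix.mul_assoc, Matrix.trace_mul_cycle]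
  have h2 : (Zᵀ * P * Z).PosSemidef := by
    have := hP.conjTranspose_mul_mul_same Z
    rwa [conjTranspose_eq_transpose_of_trivial] at this
  exact trace_nonneg_of_psd h2

lemma trace_mul_psd_psd_nonneg {m : Type*} [Fintype m] [DecidableEq m]
    {P Q : Matrix m m ℝ} (hP : P.PosSemidef) (hQ : Q.PosSemidef) :
    0 ≤ (P * Q).trace := by
  open scoped MatrixOrder in
  have hQs : Q = CFC.sqrt Q * (CFC.sqrt Q)ᵀ := by
    rw [← conjTranspose_eq_transpose_of_trivial, (CFC.sqrt_nonneg Q).posSemidef.1, CFC.sqrt_mul_sqrt_self Q hQ.nonneg]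
  rw [hQs]
  exact trace_mul_self_psd_nonneg hP (CFC.sqrt Q)

lemma psw_lower {k T : ℕ} (hT : (0:ℝ) < (T:ℝ))
    {A : Matrix (Fin k) (Fin T) ℝ} {S : Matrix (Fin k) (Fin k) ℝ}
    (hS : S.PosSemidef) (hAA : A * Aᵀ = (T:ℝ) • (S * S))
    {ε : ℝ} (hε : 0 < ε) (Y : Matrix (Fin k) (Fin T) ℝ) :
    -2 * S.trace - (k : ℝ) * ε ≤
      -(2 / (T:ℝ)) * (Aᵀ * Y).trace
        + ((S + ε • 1) * ((1 / (T:ℝ)) • (Y * Yᵀ) - 1)).trace := by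
  set N : Matrix (Fin k) (Fin k) ℝ := S + ε • (1 : Matrix (Fin k) (Fin k) ℝ) with hNdef
  have hεI : (ε • (1 : Matrix (Fin k) (Fin k) ℝ)).PosDef := by
    rw [Matrix.smul_one_eq_diagonal]
    exact Matrix.posDef_diagonal_iff.mpr fun _ => hε
  have hN : N.PosDef := Matrix.PosDef.posSemidef_add hS hεI
  have hdet : IsUnit N.det := hN.det_pos.ne'.isUnit
  have hNi : N * N⁻¹ = 1 := Matrix.mul_nonsing_inv N hdet
  have hiN : N⁻¹ * N = 1 := Matrix.nonsing_inv_mul N hdet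
  have hNsym : Nᵀ = N := by
    have := hN.isHermitian
    rwa [Matrix.IsHermitian, conjTranspose_eq_transpose_of_trivial] at this
  have hNisym : (N⁻¹)ᵀ = N⁻¹ := by
    rw [Matrix.transpose_nonsing_inv, hNsym]
  have hNiPSD : (N⁻¹).PosSemidef := hN.inv.posSemidef
  set Z : Matrix (Fin k) (Fin T) ℝ := Y - N⁻¹ * A with hZdef
  -- trace identities
  have e1 : (N * (Y * (Aᵀ * N⁻¹))).trace = (Aᵀ * Y).trace := by
    rw [Matrix.trace_mul_comm, Matrix.mul_assoc, Matrix.mul_assoc, hiN, Matrix.mul_one,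
      Matrix.trace_mul_comm]
  have e2 : (N * (N⁻¹ * A * Yᵀ)).trace = (Aᵀ * Y).trace := by
    rw [← Matrix.mul_assoc, ← Matrix.mul_assoc, hNi, Matrix.one_mul,
      ← Matrix.trace_transpose, Matrix.transpose_mul, Matrix.transpose_transpose,
      Matrix.trace_mul_comm]
  have e3 : (N * (N⁻¹ * A * (Aᵀ * N⁻¹))).trace = (Aᵀ * (N⁻¹ * A)).trace := by
    rw [← Matrix.mul_assoc, ← Matrix.mul_assoc N N⁻¹ A, hNi, Matrix.one_mul,
      Matrix.trace_mul_comm, Matrix.mul_assoc]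
  -- the completing-the-square identity
  have hZZ : Z * Zᵀ = Y * Yᵀ - Y * (Aᵀ * N⁻¹) - N⁻¹ * A * Yᵀ + N⁻¹ * A * (Aᵀ * N⁻¹) := by
    rw [hZdef]
    rw [Matrix.transpose_sub, Matrix.transpose_mul, hNisym]
    rw [Matrix.sub_mul, Matrix.mul_sub, Matrix.mul_sub]
    rw [Matrix.mul_assoc]
    abel
  have hNZZ : (N * (Z * Zᵀ)).trace
      = (N * (Y * Yᵀ)).trace - 2 * (Aᵀ * Y).trace + (Aᵀ * (N⁻¹ * A)).trace := by
    rw [hZZ, Matrix.mul_add, Matrix.mul_sub, Matrix.mul_sub,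
      Matrix.trace_add, Matrix.trace_sub, Matrix.trace_sub, e1, e2, e3]
    ring
  have hsq : (N * ((1 / (T:ℝ)) • (Y * Yᵀ) - 1)).trace
      = (1 / (T:ℝ)) * (N * (Z * Zᵀ)).trace
        + (2 / (T:ℝ)) * (Aᵀ * Y).trace
        - (1 / (T:ℝ)) * (Aᵀ * (N⁻¹ * A)).trace - N.trace := by
    rw [Matrix.mul_sub, Matrix.mul_one, Matrix.trace_sub, Matrix.mul_smul, Matrix.trace_smul,
      smul_eq_mul, hNZZ]
    ring
  rw [hsq]
  have h1 : 0 ≤ (1 / (T:ℝ)) * (N * (Z * Zᵀ)).trace :=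
    mul_nonneg (by positivity) (trace_mul_self_psd_nonneg hN.posSemidef Z)
  -- Tr(Aᵀ N⁻¹ A) = T * Tr(N⁻¹ S²)
  have h2 : (Aᵀ * (N⁻¹ * A)).trace = (T:ℝ) * (N⁻¹ * (S * S)).trace := by
    rw [Matrix.trace_mul_comm, Matrix.mul_assoc, hAA, Matrix.mul_smul, Matrix.trace_smul,
      smul_eq_mul]
  have h3 : (N⁻¹ * (S * S)).trace ≤ S.trace := by
    have key : S - N⁻¹ * (S * S) = ε • (N⁻¹ * S) := by
      have : N * S - S * S = ε • S := by
        rw [hNdef, Matrix.add_mul, Matrix.smul_mul, Matrix.one_mul]; abel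
      calc S - N⁻¹ * (S * S) = N⁻¹ * (N * S - S * S) := by
            rw [Matrix.mul_sub, ← Matrix.mul_assoc N⁻¹ N S, hiN, Matrix.one_mul]
        _ = ε • (N⁻¹ * S) := by rw [this, Matrix.mul_smul]
    have h4 : 0 ≤ (S - N⁻¹ * (S * S)).trace := by
      rw [key, Matrix.trace_smul, smul_eq_mul]
      exact mul_nonneg hε.le (trace_mul_psd_psd_nonneg hNiPSD hS)
    rw [Matrix.trace_sub] at h4
    linarith
  have h5 : N.trace = S.trace + (k : ℝ) * ε := by
    rw [hNdef, Matrix.trace_add, Matrix.trace_smul, Matrix.trace_one, smul_eq_mul]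
    simp [Fintype.card_fin]; ring
  have h6 : (1 / (T:ℝ)) * (Aᵀ * (N⁻¹ * A)).trace ≤ S.trace := by
    rw [h2, ← mul_assoc, one_div, inv_mul_cancel₀ hT.ne', one_mul]
    exact h3
  nlinarith [h1, h6]


lemma exists_Y0 {k T : ℕ} (hkT : k ≤ T) (hT : (0:ℝ) < (T:ℝ))
    {A : Matrix (Fin k) (Fin T) ℝ} {S : Matrix (Fin k) (Fin k) ℝ}
    (hS : S.PosSemidef) (hAA : A * Aᵀ = (T:ℝ) • (S * S)) :
    ∃ Y₀ : Matrix (Fin k) (Fin T) ℝ,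
      Y₀ * Y₀ᵀ = (T:ℝ) • (1 : Matrix (Fin k) (Fin k) ℝ) ∧
      (Aᵀ * Y₀).trace = (T:ℝ) * S.trace := by
  classical
  have hH : S.IsHermitian := hS.1
  set d : Fin k → ℝ := hH.eigenvalues with hd_def
  have hd : ∀ i, 0 ≤ d i := hS.eigenvalues_nonneg
  set U : Matrix (Fin k) (Fin k) ℝ := (hH.eigenvectorUnitary : Matrix (Fin k) (Fin k) ℝ)
    with hU_def
  have hstar : star U = Uᵀ := by
    rw [Matrix.star_eq_conjTranspose, conjTranspose_eq_transpose_of_trivial]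
  have hU1 : U * Uᵀ = 1 := by
    have := Matrix.mem_unitaryGroup_iff.mp (hH.eigenvectorUnitary).2
    rwa [hstar] at this
  have hU2 : Uᵀ * U = 1 := by
    have := Matrix.mem_unitaryGroup_iff'.mp (hH.eigenvectorUnitary).2
    rwa [hstar] at this
  have hspec : S = U * diagonal d * Uᵀ := by
    have := hH.spectral_theorem
    rwa [Unitary.conjStarAlgAut_apply, hstar, RCLike.ofReal_real_eq_id, Function.id_comp] at this
  have htrS : S.trace = ∑ i, d i := by
    conv_lhs => rw [hspec]
    rw [Matrix.trace_mul_cycle, hU2, Matrix.one_mul, Matrix.trace_diagonal]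
  set B : Matrix (Fin k) (Fin T) ℝ := Uᵀ * A with hB_def
  have hUSU : Uᵀ * S * U = diagonal d := by
    rw [hspec, Matrix.mul_assoc, Matrix.mul_assoc, hU2, Matrix.mul_one, ← Matrix.mul_assoc,
      hU2, Matrix.one_mul]
  have hBB : B * Bᵀ = (T:ℝ) • (diagonal d * diagonal d) := by
    have h1 : B * Bᵀ = Uᵀ * (A * Aᵀ) * U := by
      rw [hB_def, Matrix.transpose_mul, Matrix.transpose_transpose, Matrix.mul_assoc,
        ← Matrix.mul_assoc A Aᵀ U, ← Matrix.mul_assoc]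
    rw [h1, hAA, Matrix.mul_smul, Matrix.smul_mul]
    congr 1
    calc Uᵀ * (S * S) * U = Uᵀ * S * 1 * S * U := by noncomm_ring
      _ = Uᵀ * S * (U * Uᵀ) * S * U := by rw [hU1]
      _ = (Uᵀ * S * U) * (Uᵀ * S * U) := by noncomm_ring
      _ = diagonal d * diagonal d := by rw [hUSU]
  have hBent : ∀ i j, ∑ t, B i t * B j t = if i = j then (T:ℝ) * (d i)^2 else 0 := by
    intro i j
    have h1 : (B * Bᵀ) i j = ∑ t, B i t * B j t := by
      simp [Matrix.mul_apply, Matrix.transpose_apply]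
    have h2 : ((T:ℝ) • (diagonal d * diagonal d)) i j
        = if i = j then (T:ℝ) * (d i)^2 else 0 := by
      rw [Matrix.diagonal_mul_diagonal, Matrix.smul_apply, Matrix.diagonal_apply]
      by_cases h : i = j <;> simp [h, pow_two, mul_comm]
    rw [← h1, hBB, h2]
  -- move to Euclidean space
  set bvec : Fin k → EuclideanSpace ℝ (Fin T) := fun i => WithLp.toLp 2 (fun t => B i t : Fin T → ℝ)
    with hbvec_def
  have hinner : ∀ i j, (inner ℝ (bvec i) (bvec j) : ℝ)
      = if i = j then (T:ℝ) * (d i)^2 else 0 := by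
    intro i j
    rw [← hBent i j, PiLp.inner_apply]
    simp [RCLike.inner_apply, starRingEnd_apply]
    exact Finset.sum_congr rfl fun t _ => mul_comm _ _
  set u : Fin k → EuclideanSpace ℝ (Fin T) := fun i => (Real.sqrt T * d i)⁻¹ • bvec i
    with hu_def
  set v : Fin T → EuclideanSpace ℝ (Fin T) :=
    fun j => if h : (j : ℕ) < k then u ⟨j, h⟩ else 0 with hv_def
  set s : Set (Fin T) := {j | ∃ h : (j : ℕ) < k, d ⟨j, h⟩ ≠ 0} with hs_def
  have hsqT : Real.sqrt T * Real.sqrt T = (T:ℝ) := Real.mul_self_sqrt hT.le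
  have hsqT0 : Real.sqrt T ≠ 0 := by positivity
  have huu : ∀ i j : Fin k, d i ≠ 0 → d j ≠ 0 →
      (inner ℝ (u i) (u j) : ℝ) = if i = j then 1 else 0 := by
    intro i j hi hj
    rw [hu_def]
    simp only [real_inner_smul_left, real_inner_smul_right, hinner i j]
    by_cases h : i = j
    · subst h
      simp only [if_pos rfl, ↓reduceIte]
      field_simp
      nlinarith [hsqT]
    · simp [h]
  have horth : Orthonormal ℝ (s.restrict v) := by
    rw [orthonormal_iff_ite]
    intro x y
    obtain ⟨hlt₁, hd₁⟩ := x.2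
    obtain ⟨hlt₂, hd₂⟩ := y.2
    change inner ℝ (v x) (v y) = _
    simp only [hv_def]
    rw [dif_pos hlt₁, dif_pos hlt₂, huu _ _ hd₁ hd₂]
    by_cases h : x = y
    · subst h; simp
    · rw [if_neg, if_neg h]
      intro hc
      have h1 := congrArg Fin.val hc
      exact h (Subtype.ext (Fin.ext h1))
  have hcard : Module.finrank ℝ (EuclideanSpace ℝ (Fin T)) = Fintype.card (Fin T) := by
    simp [finrank_euclideanSpace_fin]
  obtain ⟨b, hb⟩ := horth.exists_orthonormalBasis_extension_of_card_eq hcard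
  have hbo : ∀ i j : Fin T, (inner ℝ (b i) (b j) : ℝ) = if i = j then 1 else 0 :=
    orthonormal_iff_ite.mp b.orthonormal
  set C : Matrix (Fin k) (Fin T) ℝ := fun i t => b (Fin.castLE hkT i) t with hC_def
  have hCC : C * Cᵀ = 1 := by
    ext i j
    have h1 : (C * Cᵀ) i j = ∑ t, C i t * C j t := by
      simp [Matrix.mul_apply, Matrix.transpose_apply]
    have h2 : (inner ℝ (b (Fin.castLE hkT i)) (b (Fin.castLE hkT j)) : ℝ)
        = ∑ t, C i t * C j t := by
      rw [PiLp.inner_apply]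
      simp [RCLike.inner_apply, starRingEnd_apply, hC_def]
      exact Finset.sum_congr rfl fun t _ => mul_comm _ _
    rw [h1, ← h2, hbo, Matrix.one_apply]
    simp [Fin.castLE_inj]
  have hCB : ∀ i, ∑ t, B i t * C i t = Real.sqrt T * d i := by
    intro i
    by_cases hdi : d i = 0
    · have hB2 : ∑ t, B i t * B i t = 0 := by
        rw [hBent i i, if_pos rfl, hdi]; ring
      have hB0 : ∀ t, B i t = 0 := by
        intro t
        have := Finset.sum_eq_zero_iff_of_nonneg
          (fun t _ => mul_self_nonneg (B i t)) |>.mp hB2 t (Finset.mem_univ t)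
        exact mul_self_eq_zero.mp this
      simp [hB0, hdi]
    · have hlt : ((Fin.castLE hkT i : Fin T) : ℕ) < k := by
        simpa [Fin.coe_castLE] using i.isLt
      have hfin : (⟨((Fin.castLE hkT i : Fin T) : ℕ), hlt⟩ : Fin k) = i := by
        apply Fin.ext; simp [Fin.coe_castLE]
      have hmem : (Fin.castLE hkT i : Fin T) ∈ s := ⟨hlt, by rw [hfin]; exact hdi⟩
      have hbi : b (Fin.castLE hkT i) = u i := by
        rw [hb _ hmem, hv_def]
        simp only
        rw [dif_pos hlt, hfin]
      have hCit : ∀ t, C i t = (Real.sqrt T * d i)⁻¹ * B i t := by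
        intro t
        rw [hC_def]
        simp only
        rw [hbi, hu_def]
        rfl
      have : ∑ t, B i t * C i t = (Real.sqrt T * d i)⁻¹ * ∑ t, B i t * B i t := by
        rw [Finset.mul_sum]
        exact Finset.sum_congr rfl fun t _ => by rw [hCit t]; ring
      rw [this, hBent i i, if_pos rfl]
      field_simp
      nlinarith [hsqT]
  refine ⟨Real.sqrt T • (U * C), ?_, ?_⟩
  · rw [Matrix.transpose_smul, Matrix.smul_mul, Matrix.mul_smul, smul_smul, hsqT]
    congr 1
    rw [Matrix.transpose_mul, Matrix.mul_assoc, ← Matrix.mul_assoc C Cᵀ Uᵀ, hCC,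
      Matrix.one_mul, hU1]
  · rw [Matrix.mul_smul, Matrix.trace_smul, smul_eq_mul]
    have hAU : Aᵀ * (U * C) = Bᵀ * C := by
      rw [hB_def, Matrix.transpose_mul, Matrix.transpose_transpose, Matrix.mul_assoc]
    rw [hAU]
    have htr2 : (Bᵀ * C).trace = ∑ i, ∑ t, B i t * C i t := by
      rw [Matrix.trace_mul_comm, Matrix.trace]
      simp only [Matrix.diag, Matrix.mul_apply, Matrix.transpose_apply]
      exact Finset.sum_congr rfl fun i _ => Finset.sum_congr rfl fun t _ => mul_comm _ _
    rw [htr2]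
    have : ∑ i, ∑ t, B i t * C i t = ∑ i : Fin k, Real.sqrt T * d i :=
      Finset.sum_congr rfl fun i _ => hCB i
    rw [this, htrS, ← Finset.mul_sum, ← mul_assoc, hsqT]


/-- Strong min-max property for the PSW cost
`g(Y, M) = −(2/T) Tr(XᵀWᵀY) + Tr(M((1/T)YYᵀ − I))`:
`inf_Y sup_M g = sup_M inf_Y g = −2 Tr S` in the extended reals, where `S`
is the positive semidefinite square root of `(1/T) W X Xᵀ Wᵀ`. -/
theorem psw_strong_minmax (n k T : ℕ) (hk : 0 < k) (hkT : k ≤ T) (hn : 0 < n)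
    (W : Matrix (Fin k) (Fin n) ℝ) (X : Matrix (Fin n) (Fin T) ℝ)
    (S : Matrix (Fin k) (Fin k) ℝ) (hS : S.PosSemidef)
    (hS2 : S ^ 2 = (1 / (T : ℝ)) • (W * X * Xᵀ * Wᵀ)) :
    let g : Matrix (Fin k) (Fin T) ℝ → Matrix (Fin k) (Fin k) ℝ → ℝ :=
      fun Y M =>
        -(2 / (T : ℝ)) * (Xᵀ * Wᵀ * Y).trace
          + (M * ((1 / (T : ℝ)) • (Y * Yᵀ) - 1)).trace
    (⨅ Y : Matrix (Fin k) (Fin T) ℝ, ⨆ M : Matrix (Fin k) (Fin k) ℝ,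
        ((g Y M : ℝ) : EReal)) = ((-2 * S.trace : ℝ) : EReal) ∧
    (⨆ M : Matrix (Fin k) (Fin k) ℝ, ⨅ Y : Matrix (Fin k) (Fin T) ℝ,
        ((g Y M : ℝ) : EReal)) = ((-2 * S.trace : ℝ) : EReal) := by
  intro g
  have hg : ∀ Y M, g Y M = -(2 / (T : ℝ)) * (Xᵀ * Wᵀ * Y).trace
      + (M * ((1 / (T : ℝ)) • (Y * Yᵀ) - 1)).trace := fun _ _ => rfl
  have hT : (0:ℝ) < (T:ℝ) := by exact_mod_cast hk.trans_le hkT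
  set A : Matrix (Fin k) (Fin T) ℝ := W * X with hA_def
  have hAT : Xᵀ * Wᵀ = Aᵀ := by rw [hA_def, Matrix.transpose_mul]
  have hAA : A * Aᵀ = (T:ℝ) • (S * S) := by
    have h2 : W * X * Xᵀ * Wᵀ = A * Aᵀ := by
      rw [hA_def, Matrix.transpose_mul, ← Matrix.mul_assoc]
    have h3 := hS2
    rw [pow_two, h2] at h3
    rw [h3, smul_smul, mul_one_div, div_self hT.ne', one_smul]
  obtain ⟨Y₀, hY₀w, hY₀tr⟩ := exists_Y0 hkT hT hS hAA
  set c : ℝ := -2 * S.trace with hc_def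
  have hgY₀ : ∀ M, g Y₀ M = c := by
    intro M
    rw [hg]
    have h0 : (1/(T:ℝ)) • (Y₀ * Y₀ᵀ) - 1 = 0 := by
      rw [hY₀w, smul_smul, one_div, inv_mul_cancel₀ hT.ne', one_smul, sub_self]
    rw [h0, Matrix.mul_zero, Matrix.trace_zero, add_zero, hAT, hY₀tr, hc_def]
    field_simp
  have key1 : (⨅ Y : Matrix (Fin k) (Fin T) ℝ, ⨆ M : Matrix (Fin k) (Fin k) ℝ,
      ((g Y M : ℝ) : EReal)) ≤ ((c : ℝ) : EReal) := by
    refine le_trans (iInf_le _ Y₀) ?_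
    simp only [hgY₀]
    rw [iSup_const]
  have key3 : (⨆ M : Matrix (Fin k) (Fin k) ℝ, ⨅ Y : Matrix (Fin k) (Fin T) ℝ,
        ((g Y M : ℝ) : EReal))
      ≤ (⨅ Y : Matrix (Fin k) (Fin T) ℝ, ⨆ M : Matrix (Fin k) (Fin k) ℝ,
        ((g Y M : ℝ) : EReal)) := iSup_iInf_le_iInf_iSup _
  have key2 : ((c : ℝ) : EReal) ≤ (⨆ M : Matrix (Fin k) (Fin k) ℝ,
      ⨅ Y : Matrix (Fin k) (Fin T) ℝ, ((g Y M : ℝ) : EReal)) := by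
    rw [← EReal.ge_of_forall_gt_iff_ge]
    intro z hz
    have hzc : z < c := by exact_mod_cast hz
    have hk' : (0:ℝ) < (k:ℝ) := by exact_mod_cast hk
    set ε : ℝ := (c - z)/k with hε_def
    have hε : 0 < ε := div_pos (by linarith) hk'
    have hkε : (k:ℝ) * ε = c - z := by rw [hε_def]; field_simp
    refine le_trans ?_ (le_iSup _ (S + ε • 1))
    refine le_iInf fun Y => ?_
    have hb := psw_lower hT hS hAA hε Y
    have hz2 : z ≤ g Y (S + ε • 1) := by
      rw [hg, hAT]
      have : -2 * S.trace - (k:ℝ) * ε = z := by rw [hkε, hc_def]; ring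
      linarith [hb]
    exact_mod_cast hz2
  constructor
  · exact le_antisymm key1 (key2.trans key3)
  · exact le_antisymm (key3.trans key1) key2
end

section
/- Let C ∈ ℝ^{n×n} be symmetric positive semidefinite with positive semidefinite square root C^{1/2}, let M ∈ ℝ^{k×k} be symmetric, and let F ∈ ℝ^{k×n} satisfy the PSW fixed-point equations M·F = F·C and F·C·Fᵀ = I_k. Set R := F·C^{1/2} (the normalized neural filters). Then R·Rᵀ = I_k and Rᵀ·R commutes with C: (Rᵀ·R)·C = C·(Rᵀ·R). -/
open Matrix

/-- At a PSW fixed point (`MF = FC`, `FCFᵀ = I`, `M` symmetric, `C` symmetric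
positive semidefinite with positive semidefinite square root `Csqrt`), the
normalized neural filters `R = F Csqrt` satisfy `RRᵀ = I` and `RᵀR` commutes
with `C`. -/
theorem psw_fixed_point_normalized_filters {n k : ℕ}
    (C Csqrt : Matrix (Fin n) (Fin n) ℝ)
    (hC : C.PosSemidef) (hCsqrt : Csqrt.PosSemidef) (hCsq : Csqrt ^ 2 = C)
    (M : Matrix (Fin k) (Fin k) ℝ) (hMsymm : Mᵀ = M)
    (F : Matrix (Fin k) (Fin n) ℝ)
    (hMF : M * F = F * C) (hwhite : F * C * Fᵀ = 1) :
    (F * Csqrt) * (F * Csqrt)ᵀ = 1 ∧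
    ((F * Csqrt)ᵀ * (F * Csqrt)) * C = C * ((F * Csqrt)ᵀ * (F * Csqrt)) := by
  have hCs : Csqrtᵀ = Csqrt := by
    have h := hCsqrt.1
    simpa [Matrix.IsHermitian, Matrix.conjTranspose_eq_transpose_of_trivial] using h
  have hCt : Cᵀ = C := by
    have h := hC.1
    simpa [Matrix.IsHermitian, Matrix.conjTranspose_eq_transpose_of_trivial] using h
  have hCC : Csqrt * Csqrt = C := by rw [← hCsq, sq]
  have h1 : (F * Csqrt) * (F * Csqrt)ᵀ = 1 := by
    rw [transpose_mul, hCs, ← hwhite, ← hCC]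
    simp only [Matrix.mul_assoc]
  have hFC : Fᵀ * F * C = C * (Fᵀ * F) := by
    calc Fᵀ * F * C = Fᵀ * (M * F) := by rw [Matrix.mul_assoc, ← hMF]
      _ = (M * F)ᵀ * F := by rw [transpose_mul, hMsymm, Matrix.mul_assoc]
      _ = (F * C)ᵀ * F := by rw [hMF]
      _ = C * (Fᵀ * F) := by rw [transpose_mul, hCt, Matrix.mul_assoc]
  have hCsC : Csqrt * C = C * Csqrt := by rw [← hCC, Matrix.mul_assoc]
  refine ⟨h1, ?_⟩
  rw [transpose_mul, hCs]
  calc Csqrt * Fᵀ * (F * Csqrt) * C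
      = Csqrt * (Fᵀ * F) * (Csqrt * C) := by simp only [Matrix.mul_assoc]
    _ = Csqrt * (Fᵀ * F) * (C * Csqrt) := by rw [hCsC]
    _ = Csqrt * (Fᵀ * F * C) * Csqrt := by simp only [Matrix.mul_assoc]
    _ = Csqrt * (C * (Fᵀ * F)) * Csqrt := by rw [hFC]
    _ = (Csqrt * C) * ((Fᵀ * F) * Csqrt) := by simp only [Matrix.mul_assoc]
    _ = (C * Csqrt) * ((Fᵀ * F) * Csqrt) := by rw [hCsC]
    _ = C * (Csqrt * Fᵀ * (F * Csqrt)) := by simp only [Matrix.mul_assoc]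
end

section
/- Fix positive integers n, k, T, matrices X ∈ ℝ^{n×T} and W ∈ ℝ^{k×n}. Define L(M, Y) := Tr(−(4/T)·Xᵀ·Wᵀ·Y + (2/T)·Yᵀ·M·Y) + 2·Tr(Wᵀ·W) − Tr(Mᵀ·M) for M ∈ ℝ^{k×k}, Y ∈ ℝ^{k×T}. Let B be a positive semidefinite k×k matrix with B³ = (1/T)·W·X·Xᵀ·Wᵀ. Then sup over M of inf over Y of L(M, Y) equals 2·Tr(Wᵀ·W) − 3·Tr(B²) (equivalently, Tr(−(3/T^{2/3})·(W·X·Xᵀ·Wᵀ)^{2/3} + 2·W·Wᵀ)), with suprema and infima taken in the extended reals. -/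
open Matrix

lemma trace_psd_nonneg {m : Type*} [Fintype m] {M : Matrix m m ℝ} (h : M.PosSemidef) :
    0 ≤ M.trace := by
  rw [Matrix.trace]
  refine Finset.sum_nonneg fun i _ => ?_
  classical
  have := h.2 (Finsupp.single i 1)
  simpa [Finsupp.sum_single_index, dotProduct, Matrix.mulVec, Pi.single_apply, Finset.sum_ite_eq,
    Matrix.diag] using this

lemma exists_factor {k T : ℕ} (B : Matrix (Fin k) (Fin k) ℝ) (A : Matrix (Fin k) (Fin T) ℝ)
    (hB : B.PosSemidef) (hAA : A * Aᵀ = (T : ℝ) • B ^ 3) :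
    ∃ C : Matrix (Fin k) (Fin T) ℝ, B * C = A ∧ C * Cᵀ = (T : ℝ) • B := by
  classical
  have hH : B.IsHermitian := hB.1
  set V : Matrix (Fin k) (Fin k) ℝ := (hH.eigenvectorUnitary : Matrix (Fin k) (Fin k) ℝ) with hV
  set D : Fin k → ℝ := RCLike.ofReal ∘ hH.eigenvalues with hD
  have hspec : B = V * diagonal D * star V := hH.spectral_theorem
  have hVV : star V * V = 1 := mem_unitaryGroup_iff'.mp hH.eigenvectorUnitary.2
  have sand : ∀ a b : Fin k → ℝ,
      (V * diagonal a * star V) * (V * diagonal b * star V)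
        = V * diagonal (fun i => a i * b i) * star V := by
    intro a b
    calc (V * diagonal a * star V) * (V * diagonal b * star V)
        = V * (diagonal a * ((star V * V) * diagonal b)) * star V := by
          simp only [Matrix.mul_assoc]
      _ = V * diagonal (fun i => a i * b i) * star V := by
          rw [hVV, Matrix.one_mul, diagonal_mul_diagonal]
  set g : Fin k → ℝ := fun i => (D i)⁻¹ with hg
  set Bp : Matrix (Fin k) (Fin k) ℝ := V * diagonal g * star V with hBp
  have hsV : star V = Vᵀ := conjTranspose_eq_transpose_of_trivial V
  have hBpT : Bpᵀ = Bp := by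
    rw [hBp, hsV, transpose_mul, transpose_mul, transpose_transpose, diagonal_transpose,
      Matrix.mul_assoc]
  have hB3d : B ^ 3 = V * diagonal (fun i => D i * D i * D i) * star V := by
    have h3 : B ^ 3 = B * B * B := by rw [pow_succ, pow_succ, pow_one]
    rw [h3, hspec, sand, sand]
  have hPB3 : (B * Bp) * B ^ 3 = B ^ 3 := by
    rw [hB3d]
    conv_lhs => rw [hspec]
    rw [hBp, sand, sand]
    have hfun : (fun i => D i * g i * (D i * D i * D i))
        = (fun i : Fin k => D i * D i * D i) := by
      funext i
      rcases eq_or_ne (D i) 0 with h | h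
      · simp [hg, h]
      · simp only [hg]; field_simp
    rw [hfun]
  have hPA : (B * Bp) * A = A := by
    set Q : Matrix (Fin k) (Fin k) ℝ := 1 - B * Bp with hQ
    have hQA : (Q * A) * (Q * A)ᵀ = 0 := by
      have : (Q * A) * (Q * A)ᵀ = Q * (A * Aᵀ) * Qᵀ := by
        rw [transpose_mul]; simp only [Matrix.mul_assoc]
      rw [this, hAA, Matrix.mul_smul, Matrix.smul_mul]
      have : Q * B ^ 3 = 0 := by
        rw [hQ, Matrix.sub_mul, Matrix.one_mul, hPB3, sub_self]
      rw [this, Matrix.zero_mul, smul_zero]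
    have hQA0 : Q * A = 0 := by
      have := (self_mul_conjTranspose_eq_zero (A := Q * A)).mp ?_
      · exact this
      · rwa [conjTranspose_eq_transpose_of_trivial]
    have h2 : Q * A = A - (B * Bp) * A := by rw [hQ, Matrix.sub_mul, Matrix.one_mul]
    have h3 : A - (B * Bp) * A = 0 := by rw [← h2, hQA0]
    exact (sub_eq_zero.mp h3).symm
  refine ⟨Bp * A, by rw [← Matrix.mul_assoc, hPA], ?_⟩
  have hBpB3Bp : Bp * B ^ 3 * Bp = B := by
    rw [hB3d, hBp, sand, sand]
    conv_rhs => rw [hspec]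
    have hfun : (fun i => g i * (D i * D i * D i) * g i) = D := by
      funext i
      rcases eq_or_ne (D i) 0 with h | h
      · simp [hg, h]
      · simp only [hg]; field_simp
    rw [hfun]
  calc (Bp * A) * (Bp * A)ᵀ = Bp * (A * Aᵀ) * Bpᵀ := by
        rw [transpose_mul]; simp only [Matrix.mul_assoc]
    _ = (T : ℝ) • B := by
        rw [hAA, hBpT, Matrix.mul_smul, Matrix.smul_mul, hBpB3Bp]

/-- Eliminating outputs and lateral weights from the mixed PSP objective
`L(M, Y) = Tr(−(4/T)XᵀWᵀY + (2/T)YᵀMY) + 2 Tr(WᵀW) − Tr(MᵀM)` gives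
`sup_M inf_Y L = 2 Tr(WᵀW) − 3 Tr(B²)` in the extended reals, where `B` is
positive semidefinite with `B³ = (1/T) W X Xᵀ Wᵀ`. -/
theorem psp_fractional_objective (n k T : ℕ) (hn : 0 < n) (hk : 0 < k) (hT : 0 < T)
    (X : Matrix (Fin n) (Fin T) ℝ) (W : Matrix (Fin k) (Fin n) ℝ)
    (B : Matrix (Fin k) (Fin k) ℝ) (hB : B.PosSemidef)
    (hB3 : B ^ 3 = (1 / (T : ℝ)) • (W * X * Xᵀ * Wᵀ)) :
    (⨆ M : Matrix (Fin k) (Fin k) ℝ, ⨅ Y : Matrix (Fin k) (Fin T) ℝ,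
        ((((-(4 / (T : ℝ))) • (Xᵀ * Wᵀ * Y) + (2 / (T : ℝ)) • (Yᵀ * M * Y)).trace
            + 2 * (Wᵀ * W).trace - (Mᵀ * M).trace : ℝ) : EReal))
      = ((2 * (Wᵀ * W).trace - 3 * (B ^ 2).trace : ℝ) : EReal) := by
  have hT' : (0 : ℝ) < T := by exact_mod_cast hT
  have hTne : (T : ℝ) ≠ 0 := ne_of_gt hT'
  set A : Matrix (Fin k) (Fin T) ℝ := W * X with hA
  have hAA : A * Aᵀ = (T : ℝ) • B ^ 3 := by
    rw [hB3, smul_smul, mul_one_div_cancel hTne, one_smul, hA, transpose_mul]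
    simp only [Matrix.mul_assoc]
  obtain ⟨C, hBC, hCC⟩ := exists_factor B A hB hAA
  have hBt : Bᵀ = B := by rw [← conjTranspose_eq_transpose_of_trivial]; exact hB.1
  have hAt : Aᵀ = Xᵀ * Wᵀ := by rw [hA, transpose_mul]
  -- trace computations
  have t1 : (Xᵀ * Wᵀ * C).trace = (T : ℝ) * (B ^ 2).trace := by
    have e2 : C * Aᵀ = (T : ℝ) • B ^ 2 := by
      rw [← hBC, transpose_mul, hBt, ← Matrix.mul_assoc, hCC, Matrix.smul_mul, pow_two]
    rw [← hAt, trace_mul_comm, e2, trace_smul, smul_eq_mul]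
  have t2 : ∀ M : Matrix (Fin k) (Fin k) ℝ,
      (Cᵀ * M * C).trace = (T : ℝ) * (M * B).trace := by
    intro M
    rw [Matrix.mul_assoc, trace_mul_comm, Matrix.mul_assoc, hCC, Matrix.mul_smul,
      trace_smul, smul_eq_mul]
  have t3 : ∀ Y : Matrix (Fin k) (Fin T) ℝ,
      (Yᵀ * B * C).trace = (Xᵀ * Wᵀ * Y).trace := by
    intro Y
    rw [Matrix.mul_assoc, hBC, ← trace_transpose (Yᵀ * A), transpose_mul,
      transpose_transpose, hAt]
  have t4 : ∀ Y : Matrix (Fin k) (Fin T) ℝ,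
      (Cᵀ * B * Y).trace = (Xᵀ * Wᵀ * Y).trace := by
    intro Y
    have : Cᵀ * B = Xᵀ * Wᵀ := by
      rw [← hAt, ← hBC, transpose_mul, hBt]
    rw [this]
  have t5 : (Cᵀ * B * C).trace = (T : ℝ) * (B ^ 2).trace := by
    rw [t2 B, pow_two]
  -- transpose-trace helper
  have c1 : ∀ M N : Matrix (Fin k) (Fin k) ℝ, (Mᵀ * N).trace = (Nᵀ * M).trace := by
    intro M N
    rw [← trace_transpose (Mᵀ * N), transpose_mul, transpose_transpose]
  -- upper bound : value at Y = C
  have up : ∀ M : Matrix (Fin k) (Fin k) ℝ,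
      ((-(4 / (T : ℝ))) • (Xᵀ * Wᵀ * C) + (2 / (T : ℝ)) • (Cᵀ * M * C)).trace
          + 2 * (Wᵀ * W).trace - (Mᵀ * M).trace
        ≤ 2 * (Wᵀ * W).trace - 3 * (B ^ 2).trace := by
    intro M
    have expand : ((M - B)ᵀ * (M - B)).trace
        = (Mᵀ * M).trace - 2 * (M * B).trace + (B ^ 2).trace := by
      have e1 : (Mᵀ * B).trace = (M * B).trace := by
        rw [c1, hBt, trace_mul_comm]
      have e2 : (Bᵀ * M).trace = (M * B).trace := by
        rw [hBt, trace_mul_comm]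
      have e3 : (Bᵀ * B).trace = (B ^ 2).trace := by rw [hBt, pow_two]
      rw [transpose_sub, Matrix.sub_mul, Matrix.mul_sub, Matrix.mul_sub, trace_sub, trace_sub,
        trace_sub, e1, e2, e3]
      ring
    have pos : 0 ≤ ((M - B)ᵀ * (M - B)).trace := by
      have h := posSemidef_conjTranspose_mul_self (M - B)
      rw [conjTranspose_eq_transpose_of_trivial] at h
      exact trace_psd_nonneg h
    rw [trace_add, trace_smul, trace_smul, smul_eq_mul, smul_eq_mul, t1, t2 M]
    have hc4 : -(4 / (T : ℝ)) * ((T : ℝ) * (B ^ 2).trace) = -4 * (B ^ 2).trace := by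
      field_simp
    have hc2 : (2 / (T : ℝ)) * ((T : ℝ) * (M * B).trace) = 2 * (M * B).trace := by
      field_simp
    rw [hc4, hc2]
    linarith
  -- lower bound at M = B
  have low : ∀ Y : Matrix (Fin k) (Fin T) ℝ,
      2 * (Wᵀ * W).trace - 3 * (B ^ 2).trace
        ≤ ((-(4 / (T : ℝ))) • (Xᵀ * Wᵀ * Y) + (2 / (T : ℝ)) • (Yᵀ * B * Y)).trace
            + 2 * (Wᵀ * W).trace - (Bᵀ * B).trace := by
    intro Y
    have key : ((Y - C)ᵀ * B * (Y - C)).trace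
        = (Yᵀ * B * Y).trace - 2 * (Xᵀ * Wᵀ * Y).trace + (T : ℝ) * (B ^ 2).trace := by
      rw [transpose_sub, Matrix.sub_mul, Matrix.sub_mul, Matrix.mul_sub, Matrix.mul_sub,
        trace_sub, trace_sub, trace_sub, t3 Y, t4 Y, t5]
      ring
    have pos : 0 ≤ ((Y - C)ᵀ * B * (Y - C)).trace := by
      have h := hB.conjTranspose_mul_mul_same (Y - C)
      rw [conjTranspose_eq_transpose_of_trivial] at h
      exact trace_psd_nonneg h
    rw [trace_add, trace_smul, trace_smul, smul_eq_mul, smul_eq_mul]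
    have e3 : (Bᵀ * B).trace = (B ^ 2).trace := by rw [hBt, pow_two]
    rw [e3]
    set q := (Xᵀ * Wᵀ * Y).trace
    set p := (Yᵀ * B * Y).trace
    have lin : -(4 / (T : ℝ)) * q + (2 / (T : ℝ)) * p + 2 * (Wᵀ * W).trace - (B ^ 2).trace
        - (2 * (Wᵀ * W).trace - 3 * (B ^ 2).trace)
        = (2 / (T : ℝ)) * (p - 2 * q + (T : ℝ) * (B ^ 2).trace) := by
      field_simp
      ring
    have h6 : 0 ≤ (2 / (T : ℝ)) * ((Y - C)ᵀ * B * (Y - C)).trace := by positivity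
    rw [key] at h6
    linarith
  refine le_antisymm (iSup_le fun M => ?_) ?_
  · exact le_trans (iInf_le _ C) (EReal.coe_le_coe_iff.mpr (up M))
  · refine le_trans ?_ (le_iSup _ B)
    exact le_iInf fun Y => EReal.coe_le_coe_iff.mpr (low Y)
end

section
/- Fix positive integers n, k, T with k ≤ T, and matrices X ∈ ℝ^{n×T}, W ∈ ℝ^{k×n}. Define L(M, Y) := −(2/T)·Tr(Xᵀ·Wᵀ·Y) + Tr(Wᵀ·W) + Tr(M·((1/T)·Y·Yᵀ − I_k)) for M ∈ ℝ^{k×k}, Y ∈ ℝ^{k×T}. Then sup over M of inf over Y of L(M, Y) equals Tr(Wᵀ·W) − 2·Tr(S), where S is the unique positive semidefinite square root of (1/T)·W·X·Xᵀ·Wᵀ (equivalently, the value is Tr(−(2/T^{1/2})·(W·X·Xᵀ·Wᵀ)^{1/2} + W·Wᵀ)), with suprema and infima taken in the extended reals. -/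
open Matrix

lemma trace_psd_nonneg_s18 {m : Type*} [Fintype m] [DecidableEq m] {A : Matrix m m ℝ}
    (hA : A.PosSemidef) : 0 ≤ A.trace := by
  rw [Matrix.trace]
  refine Finset.sum_nonneg fun i _ => ?_
  have := hA.dotProduct_mulVec_nonneg (Pi.single i 1)
  simpa [dotProduct, Matrix.mulVec, Pi.single_apply, Matrix.diag] using this

open scoped MatrixOrder in
lemma trace_mul_nonneg {m : Type*} [Fintype m] [DecidableEq m] {A B : Matrix m m ℝ}
    (hA : A.PosSemidef) (hB : B.PosSemidef) : 0 ≤ (A * B).trace := by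
  have h2 : (A * B).trace = (CFC.sqrt A * B * (CFC.sqrt A)ᴴ).trace := by
    rw [(CFC.sqrt_nonneg A).posSemidef.isHermitian.eq]
    conv_lhs => rw [← CFC.sqrt_mul_sqrt_self A hA.nonneg]
    rw [Matrix.mul_assoc, Matrix.trace_mul_comm]
  rw [h2]
  exact trace_psd_nonneg_s18 (hB.mul_mul_conjTranspose_same (CFC.sqrt A))

lemma trace_mul_vecMulVec {m : Type*} [Fintype m]
    (A : Matrix m m ℝ) (x y : m → ℝ) :
    (A * vecMulVec x y).trace = y ⬝ᵥ (A *ᵥ x) := by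
  simp only [Matrix.trace, Matrix.diag, Matrix.mul_apply, vecMulVec_apply, dotProduct,
    Matrix.mulVec, Finset.mul_sum]
  exact Finset.sum_congr rfl fun i _ => Finset.sum_congr rfl fun j _ => by ring

lemma vecMulVec_mul_vecMulVec {m p : Type*} [Fintype p] (x : m → ℝ) (w : p → ℝ) (y : m → ℝ) :
    vecMulVec x w * vecMulVec w y = (w ⬝ᵥ w) • vecMulVec x y := by
  ext i j
  simp only [Matrix.mul_apply, vecMulVec_apply, Matrix.smul_apply, dotProduct, smul_eq_mul,
    Finset.sum_mul]
  exact Finset.sum_congr rfl fun l _ => by ring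

lemma conj_mul_conj {k : ℕ} (U : Matrix (Fin k) (Fin k) ℝ) (hU : star U * U = 1)
    (a b : Fin k → ℝ) :
    (U * diagonal a * star U) * (U * diagonal b * star U)
      = U * diagonal (fun i => a i * b i) * star U := by
  have h : diagonal a * (star U * (U * (diagonal b * star U)))
      = diagonal (fun i => a i * b i) * star U := by
    rw [← Matrix.mul_assoc (star U) U, hU, one_mul, ← Matrix.mul_assoc,
      diagonal_mul_diagonal]
  calc (U * diagonal a * star U) * (U * diagonal b * star U)
      = U * (diagonal a * (star U * (U * (diagonal b * star U)))) := by
        simp only [Matrix.mul_assoc]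
    _ = U * diagonal (fun i => a i * b i) * star U := by rw [h, Matrix.mul_assoc]

lemma exists_pinv {k : ℕ} (S : Matrix (Fin k) (Fin k) ℝ) (hS : S.PosSemidef) :
    ∃ D : Matrix (Fin k) (Fin k) ℝ, D * (S * S) = S ∧ Dᵀ = D ∧
      PosSemidef (1 - S * D) ∧ (1 - S * D)ᵀ = 1 - S * D := by
  classical
  set U : Matrix (Fin k) (Fin k) ℝ := (hS.1.eigenvectorUnitary : Matrix (Fin k) (Fin k) ℝ) with hUdef
  set e : Fin k → ℝ := hS.1.eigenvalues with hedef
  have hU1 : star U * U = 1 := Matrix.mem_unitaryGroup_iff'.mp hS.1.eigenvectorUnitary.2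
  have hU2 : U * star U = 1 := Matrix.mem_unitaryGroup_iff.mp hS.1.eigenvectorUnitary.2
  have hspec : S = U * diagonal e * star U := by
    have := hS.1.spectral_theorem
    simpa [RCLike.ofReal_real_eq_id] using this
  set g : Fin k → ℝ := fun i => if e i = 0 then 0 else (e i)⁻¹ with hgdef
  set D : Matrix (Fin k) (Fin k) ℝ := U * diagonal g * star U with hDdef
  have hDS2 : D * (S * S) = S := by
    rw [hspec, conj_mul_conj U hU1, conj_mul_conj U hU1]
    have hfun : (fun i => g i * (e i * e i)) = e := by
      funext i
      by_cases h : e i = 0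
      · simp [hgdef, h]
      · simp only [hgdef, if_neg h]
        rw [← mul_assoc, inv_mul_cancel₀ h, one_mul]
    rw [hfun]
  have hDpsd : D.PosSemidef := by
    have hd : PosSemidef (diagonal g) := by
      refine PosSemidef.diagonal fun i => ?_
      by_cases h : e i = 0
      · simp [hgdef, h]
      · simp only [hgdef, if_neg h]
        have := hS.eigenvalues_nonneg i
        positivity
    simpa [Matrix.star_eq_conjTranspose, hDdef] using hd.mul_mul_conjTranspose_same U
  have hQpsd : PosSemidef (1 - S * D) := by
    have hSD : S * D = U * diagonal (fun i => e i * g i) * star U := by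
      rw [hspec, hDdef, conj_mul_conj U hU1]
    have hone : (1 : Matrix (Fin k) (Fin k) ℝ) = U * diagonal (fun _ => 1) * star U := by
      rw [diagonal_one, mul_one, hU2]
    have hQ : (1 : Matrix (Fin k) (Fin k) ℝ) - S * D
        = U * diagonal (fun i => 1 - e i * g i) * star U := by
      rw [hSD]
      conv_lhs => rw [hone]
      rw [← Matrix.sub_mul, ← Matrix.mul_sub, diagonal_sub]
    rw [hQ]
    have hd : PosSemidef (diagonal (fun i => 1 - e i * g i)) := by
      refine PosSemidef.diagonal fun i => ?_
      by_cases h : e i = 0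
      · simp [hgdef, h]
      · simp [hgdef, if_neg h, mul_inv_cancel₀ h]
    simpa [Matrix.star_eq_conjTranspose] using hd.mul_mul_conjTranspose_same U
  refine ⟨D, hDS2, ?_, hQpsd, ?_⟩
  · rw [← Matrix.conjTranspose_eq_transpose_of_trivial]
    exact hDpsd.isHermitian
  · rw [← Matrix.conjTranspose_eq_transpose_of_trivial]
    exact hQpsd.isHermitian

set_option maxHeartbeats 1000000 in
/-- Eliminating outputs and Lagrange multipliers from the mixed PSW objective
`L(M, Y) = −(2/T) Tr(XᵀWᵀY) + Tr(WᵀW) + Tr(M((1/T)YYᵀ − I))` gives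
`sup_M inf_Y L = Tr(WᵀW) − 2 Tr S` in the extended reals, where `S` is the
positive semidefinite square root of `(1/T) W X Xᵀ Wᵀ`. -/
theorem psw_fractional_objective (n k T : ℕ) (hn : 0 < n) (hk : 0 < k) (hkT : k ≤ T)
    (X : Matrix (Fin n) (Fin T) ℝ) (W : Matrix (Fin k) (Fin n) ℝ)
    (S : Matrix (Fin k) (Fin k) ℝ) (hS : S.PosSemidef)
    (hS2 : S ^ 2 = (1 / (T : ℝ)) • (W * X * Xᵀ * Wᵀ)) :
    (⨆ M : Matrix (Fin k) (Fin k) ℝ, ⨅ Y : Matrix (Fin k) (Fin T) ℝ,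
        ((-(2 / (T : ℝ)) * (Xᵀ * Wᵀ * Y).trace + (Wᵀ * W).trace
            + (M * ((1 / (T : ℝ)) • (Y * Yᵀ) - 1)).trace : ℝ) : EReal))
      = (((Wᵀ * W).trace - 2 * S.trace : ℝ) : EReal) := by
  classical
  have hT : 0 < T := lt_of_lt_of_le hk hkT
  have ht : (0:ℝ) < (T:ℝ) := by exact_mod_cast hT
  set t : ℝ := (T : ℝ) with htdef
  set B : Matrix (Fin k) (Fin T) ℝ := W * X with hBdef
  have hBt : Xᵀ * Wᵀ = Bᵀ := (transpose_mul W X).symm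
  have hBB : B * Bᵀ = t • (S * S) := by
    have h1 : S * S = (1/t) • (W * X * Xᵀ * Wᵀ) := by rw [← pow_two]; exact hS2
    rw [hBdef, transpose_mul, ← Matrix.mul_assoc, h1, smul_smul, mul_one_div,
      div_self ht.ne', one_smul]
  set c : ℝ := (Wᵀ * W).trace - 2 * S.trace with hcdef
  set w0 : ℝ := (Wᵀ * W).trace with hw0
  -- simplified form of the objective
  have hL : ∀ (M : Matrix (Fin k) (Fin k) ℝ) (Y : Matrix (Fin k) (Fin T) ℝ),
      (-(2 / t) * (Xᵀ * Wᵀ * Y).trace + (Wᵀ * W).trace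
          + (M * ((1/t) • (Y * Yᵀ) - 1)).trace)
        = -(2/t) * (Bᵀ * Y).trace + w0 + (1/t) * (M * (Y * Yᵀ)).trace - M.trace := by
    intro M Y
    rw [Matrix.mul_sub, Matrix.mul_one, Matrix.trace_sub, Matrix.mul_smul,
      Matrix.trace_smul, hBt, smul_eq_mul]
    ring
  apply le_antisymm
  · -- upper bound
    refine iSup_le fun M => ?_
    by_cases hN : (M + Mᵀ).PosSemidef
    · -- case: symmetric part PSD, use Y = D * B with D pseudoinverse of S
      obtain ⟨D, hDS2, hDsymm, hQpsd, hQsymm⟩ := exists_pinv S hS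
      refine iInf_le_of_le (D * B) (EReal.coe_le_coe_iff.mpr ?_)
      rw [hL]
      have e1 : (Bᵀ * (D * B)).trace = t * S.trace := by
        rw [Matrix.trace_mul_comm, Matrix.mul_assoc, hBB, Matrix.mul_smul,
          Matrix.trace_smul, hDS2, smul_eq_mul]
      have e2 : (D * B) * (D * B)ᵀ = t • (S * D) := by
        rw [Matrix.transpose_mul, hDsymm]
        calc D * B * (Bᵀ * D) = D * (B * (Bᵀ * D)) := by rw [Matrix.mul_assoc D B]
          _ = D * ((B * Bᵀ) * D) := by rw [← Matrix.mul_assoc B Bᵀ D]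
          _ = t • ((D * (S * S)) * D) := by
              rw [hBB, Matrix.smul_mul, Matrix.mul_smul, ← Matrix.mul_assoc D (S * S) D]
          _ = t • (S * D) := by rw [hDS2]
      have e3 : (M * ((D * B) * (D * B)ᵀ)).trace = t * (M * (S * D)).trace := by
        rw [e2, Matrix.mul_smul, Matrix.trace_smul, smul_eq_mul]
      rw [e1, e3]
      -- key inequality : Tr(M (S D)) ≤ Tr M
      have hMT : (Mᵀ * (1 - S * D)).trace = (M * (1 - S * D)).trace := by
        conv_lhs => rw [← Matrix.trace_transpose, Matrix.transpose_mul,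
          Matrix.transpose_transpose, hQsymm]
        rw [Matrix.trace_mul_comm]
      have key : 0 ≤ ((M + Mᵀ) * (1 - S * D)).trace := trace_mul_nonneg hN hQpsd
      have split : ((M + Mᵀ) * (1 - S * D)).trace
          = 2 * (M.trace - (M * (S * D)).trace) := by
        rw [Matrix.add_mul, Matrix.trace_add, hMT, Matrix.mul_sub, Matrix.mul_one,
          Matrix.trace_sub]
        ring
      rw [split] at key
      have h1 : 2 / t * (t * S.trace) = 2 * S.trace := by field_simp
      have h2 : 1 / t * (t * (M * (S * D)).trace) = (M * (S * D)).trace := by field_simp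
      rw [hcdef, hw0]
      linarith [key, h1, h2]
    · -- symmetric part not PSD: objective unbounded below
      have hNh : (M + Mᵀ).IsHermitian := by
        rw [Matrix.IsHermitian, conjTranspose_add,
          Matrix.conjTranspose_eq_transpose_of_trivial,
          Matrix.conjTranspose_eq_transpose_of_trivial, Matrix.transpose_transpose, add_comm]
      have hx : ∃ x : Fin k → ℝ, x ⬝ᵥ ((M + Mᵀ) *ᵥ x) < 0 := by
        by_contra hcon
        push_neg at hcon
        exact hN (PosSemidef.of_dotProduct_mulVec_nonneg hNh fun x => by simpa using hcon x)
      obtain ⟨x, hx⟩ := hx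
      set q : ℝ := x ⬝ᵥ (M *ᵥ x) with hq
      have hqneg : q < 0 := by
        have hMTx : x ⬝ᵥ (Mᵀ *ᵥ x) = q := by
          rw [Matrix.mulVec_transpose, dotProduct_comm, ← Matrix.dotProduct_mulVec]
        have h2q : x ⬝ᵥ ((M + Mᵀ) *ᵥ x) = 2 * q := by
          rw [Matrix.add_mulVec, dotProduct_add, hMTx]; ring
        rw [h2q] at hx
        linarith
      set w1 : Fin T → ℝ := fun _ => 1 with hw1
      set V : Matrix (Fin k) (Fin T) ℝ := vecMulVec x w1 with hV
      have hVT : Vᵀ = vecMulVec w1 x := by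
        ext i j; simp [hV, vecMulVec_apply, Matrix.transpose_apply, mul_comm]
      have hVV : V * Vᵀ = t • vecMulVec x x := by
        rw [hVT, hV, _root_.vecMulVec_mul_vecMulVec]
        congr 1
        simp [hw1, dotProduct, htdef]
      set l : ℝ := (Bᵀ * V).trace with hl
      set b : ℝ := 2 / t * l with hb
      set c0 : ℝ := M.trace - 2 * S.trace with hc0
      set τ : ℝ := max 1 ((|b| + |c0| + 1) / (-q)) with hτ
      have hτ1 : 1 ≤ τ := le_max_left _ _
      have hτ0 : 0 ≤ τ := le_trans zero_le_one hτ1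
      have hτq : |b| + |c0| + 1 ≤ -q * τ := by
        have h := le_max_right 1 ((|b| + |c0| + 1) / (-q))
        calc |b| + |c0| + 1 = -q * ((|b| + |c0| + 1) / (-q)) := by
              rw [mul_comm, div_mul_cancel₀ _ (ne_of_gt (neg_pos.mpr hqneg))]
          _ ≤ -q * τ := mul_le_mul_of_nonneg_left h (by linarith)
      refine iInf_le_of_le (τ • V) (EReal.coe_le_coe_iff.mpr ?_)
      rw [hL]
      have f1 : (Bᵀ * (τ • V)).trace = τ * l := by
        rw [Matrix.mul_smul, Matrix.trace_smul, smul_eq_mul, hl]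
      have f2 : (τ • V) * (τ • V)ᵀ = (τ * τ * t) • vecMulVec x x := by
        rw [Matrix.transpose_smul, Matrix.smul_mul, Matrix.mul_smul, hVV, smul_smul, smul_smul]
      have f3 : (M * ((τ • V) * (τ • V)ᵀ)).trace = τ * τ * t * q := by
        rw [f2, Matrix.mul_smul, Matrix.trace_smul, smul_eq_mul, trace_mul_vecMulVec, hq]
      rw [f1, f3]
      have h3 : 1 / t * (τ * τ * t * q) = τ * τ * q := by field_simp
      have h4 : -(2/t) * (τ * l) = -(b * τ) := by rw [hb]; ring
      rw [h4, h3, hcdef, hw0]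
      have habs2 : -|b| ≤ b := neg_abs_le b
      have habs4 : -|c0| ≤ c0 := neg_abs_le c0
      have h5 : |c0| + 1 ≤ τ * (|c0| + 1) :=
        le_mul_of_one_le_left (by positivity) hτ1
      nlinarith [hτ1, hτq, hqneg, habs2, habs4, h5,
        mul_le_mul_of_nonneg_left habs2 hτ0, mul_le_mul_of_nonneg_left hτq hτ0]
  · -- lower bound : c ≤ sup, via M = S + ε•1
    rw [le_iSup_iff]
    intro bnd hbnd
    by_contra hcon
    push_neg at hcon
    obtain ⟨r, hr1, hr2⟩ := EReal.exists_between_coe_real hcon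
    have hrc : r < c := by exact_mod_cast hr2
    have hk0 : (0:ℝ) < k := by exact_mod_cast hk
    set ε : ℝ := (c - r) / k with hεdef
    have hεpos : 0 < ε := div_pos (by linarith) hk0
    have hεk : ε * k = c - r := by rw [hεdef]; field_simp
    set M : Matrix (Fin k) (Fin k) ℝ := S + ε • 1 with hMdef
    have hone : (ε • (1 : Matrix (Fin k) (Fin k) ℝ)) = diagonal (fun _ => ε) := by
      ext i j
      by_cases h : i = j <;> simp [h, Matrix.one_apply, diagonal_apply]
    have hMpd : M.PosDef := by
      refine Matrix.PosDef.posSemidef_add hS ?_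
      rw [hone]
      exact Matrix.posDef_diagonal_iff.mpr fun _ => hεpos
    have hdet : IsUnit M.det := (Matrix.isUnit_iff_isUnit_det M).mp (Matrix.PosDef.isUnit hMpd)
    have hMinv : M * M⁻¹ = 1 := Matrix.mul_nonsing_inv M hdet
    have hMinv' : M⁻¹ * M = 1 := Matrix.nonsing_inv_mul M hdet
    have hSsymm : Sᵀ = S := by
      rw [← Matrix.conjTranspose_eq_transpose_of_trivial]; exact hS.1
    have hMsymm : Mᵀ = M := by
      rw [hMdef, Matrix.transpose_add, hSsymm, Matrix.transpose_smul, Matrix.transpose_one]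
    have hMinvT : M⁻¹ᵀ = M⁻¹ := by
      rw [Matrix.transpose_nonsing_inv, hMsymm]
    have hMinvPSD : (M⁻¹).PosSemidef := (Matrix.PosDef.inv hMpd).posSemidef
    have hMtr : M.trace = S.trace + ε * k := by
      rw [hMdef, Matrix.trace_add, Matrix.trace_smul, Matrix.trace_one, smul_eq_mul]
      simp
    -- pointwise lower bound for every Y
    have hpt : ∀ Y : Matrix (Fin k) (Fin T) ℝ,
        r ≤ -(2/t) * (Bᵀ * Y).trace + w0 + (1/t) * (M * (Y * Yᵀ)).trace - M.trace := by
      intro Y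
      set E : Matrix (Fin k) (Fin T) ℝ := Y - M⁻¹ * B with hEdef
      have hET : Eᵀ = Yᵀ - Bᵀ * M⁻¹ := by
        rw [hEdef, Matrix.transpose_sub, Matrix.transpose_mul, hMinvT]
      have hMB : M * (M⁻¹ * B) = B := by rw [← Matrix.mul_assoc, hMinv, Matrix.one_mul]
      have hexp : M * (E * Eᵀ)
          = M * (Y * Yᵀ) - M * (Y * (Bᵀ * M⁻¹)) - M * ((M⁻¹ * B) * Yᵀ)
            + M * ((M⁻¹ * B) * (Bᵀ * M⁻¹)) := by
        rw [hEdef, hET, Matrix.sub_mul, Matrix.mul_sub Y, Matrix.mul_sub (M⁻¹ * B),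
          Matrix.mul_sub M, Matrix.mul_sub M, Matrix.mul_sub M]
        abel
      have tr1 : (M * (Y * (Bᵀ * M⁻¹))).trace = (Bᵀ * Y).trace := by
        rw [Matrix.trace_mul_comm, Matrix.mul_assoc Y (Bᵀ * M⁻¹) M,
          Matrix.mul_assoc Bᵀ M⁻¹ M, hMinv', Matrix.mul_one, Matrix.trace_mul_comm]
      have tr2 : (M * ((M⁻¹ * B) * Yᵀ)).trace = (Bᵀ * Y).trace := by
        rw [← Matrix.mul_assoc M (M⁻¹ * B) Yᵀ, hMB, ← Matrix.trace_transpose,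
          Matrix.transpose_mul, Matrix.transpose_transpose, Matrix.trace_mul_comm]
      have tr3 : (M * ((M⁻¹ * B) * (Bᵀ * M⁻¹))).trace = (M⁻¹ * (B * Bᵀ)).trace := by
        rw [← Matrix.mul_assoc M (M⁻¹ * B) (Bᵀ * M⁻¹), hMB,
          ← Matrix.mul_assoc B Bᵀ M⁻¹, Matrix.trace_mul_comm]
      have id1 : (M * (E * Eᵀ)).trace
          = (M * (Y * Yᵀ)).trace - 2 * (Bᵀ * Y).trace + (M⁻¹ * (B * Bᵀ)).trace := by
        rw [hexp, Matrix.trace_add, Matrix.trace_sub, Matrix.trace_sub, tr1, tr2, tr3]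
        ring
      have hSSM : S * S = M * S - ε • S := by
        rw [hMdef, Matrix.add_mul, Matrix.smul_mul, one_mul]
        abel
      have id2 : (M⁻¹ * (B * Bᵀ)).trace = t * S.trace - t * (ε * (M⁻¹ * S).trace) := by
        rw [hBB, Matrix.mul_smul, Matrix.trace_smul, smul_eq_mul, hSSM, Matrix.mul_sub,
          ← Matrix.mul_assoc, hMinv', one_mul, Matrix.mul_smul, Matrix.trace_sub,
          Matrix.trace_smul, smul_eq_mul]
        ring
      have hP1 : 0 ≤ (M * (E * Eᵀ)).trace := by
        have hEE : (E * Eᵀ).PosSemidef := by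
          have := Matrix.posSemidef_self_mul_conjTranspose E
          rwa [Matrix.conjTranspose_eq_transpose_of_trivial] at this
        exact trace_mul_nonneg hMpd.posSemidef hEE
      have hP2 : 0 ≤ (M⁻¹ * S).trace := trace_mul_nonneg hMinvPSD hS
      have hQ1 : (M * (Y * Yᵀ)).trace
          = (M * (E * Eᵀ)).trace + 2 * (Bᵀ * Y).trace - t * S.trace
            + t * (ε * (M⁻¹ * S).trace) := by
        rw [id1, id2]; ring
      have hr' : r = c - ε * k := by rw [hεk]; ring
      rw [hQ1, hMtr, hr', hcdef, hw0]
      have hsimp : 1/t * ((M * (E * Eᵀ)).trace + 2 * (Bᵀ * Y).trace - t * S.trace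
            + t * (ε * (M⁻¹ * S).trace))
          = 1/t * (M * (E * Eᵀ)).trace + 2/t * (Bᵀ * Y).trace - S.trace
            + ε * (M⁻¹ * S).trace := by
        field_simp
      rw [hsimp]
      linarith [mul_nonneg (one_div_nonneg.mpr ht.le) hP1, mul_nonneg hεpos.le hP2]
    -- conclude
    have hinf : (r : EReal) ≤ ⨅ Y : Matrix (Fin k) (Fin T) ℝ,
        ((-(2 / t) * (Xᵀ * Wᵀ * Y).trace + (Wᵀ * W).trace
            + (M * ((1/t) • (Y * Yᵀ) - 1)).trace : ℝ) : EReal) := by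
      refine le_iInf fun Y => ?_
      rw [EReal.coe_le_coe_iff, hL]
      exact hpt Y
    exact absurd (le_trans hinf (hbnd M)) (not_le.mpr hr1)
end
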